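/- arXiv:1001.1781 — 5 statements merged into one kernel-verified Lean document; each statement's English description precedes it below -/
import Mathlib

section
/- Let C ⊆ Σ^n be any code (|Σ| = q ≥ 3) with minimum distance at least δn, let S ⊆ [n] with |S| = (1−ρ)n where ρ ≤ δ − ε, and fix a codeword c ∈ C and real α ≥ 1 − δ + ε. Then the number of error patterns e ∈ Σ^n with wt(e) = ρn, supp(e) ∩ S = ∅, for which there exists a codeword c' ≠ c with Δ(c+e, c') = (1−α)n, is at most 2^n · (q−1)^{(1−δ−α)n+1} · (q−1)^{ρn}. -/
open Finset

/-- For a code of minimum distance `δn`, a fixed codeword `c`, a set `S`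
of `(1−ρ)n` positions and a real `α ≥ 1−δ+ε`, the number of error patterns `e` of
weight `ρn` supported outside `S` for which some codeword `c' ≠ c` is at exactly
distance `(1−α)n` from `c+e` is at most `2^n (q−1)^{(1−δ−α)n+1} (q−1)^{ρn}`. -/
theorem stmt_5 (q n : ℕ) [NeZero q] (hq : 3 ≤ q) (δ ε ρ α : ℝ)
    (hδ : 0 < δ) (hδ1 : δ < 1) (hε : 0 < ε) (hε1 : ε < 1)
    (hρ0 : 0 ≤ ρ) (hρ : ρ ≤ δ - ε) (hα : 1 - δ + ε ≤ α)
    (C : Finset (Fin n → ZMod q))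
    (hdist : ∀ c ∈ C, ∀ c' ∈ C, c ≠ c' → δ * n ≤ (hammingDist c c' : ℝ))
    (S : Finset (Fin n)) (hS : (S.card : ℝ) = (1 - ρ) * n)
    (c : Fin n → ZMod q) (hc : c ∈ C) :
    ((Finset.univ.filter (fun e : Fin n → ZMod q =>
        ((Finset.univ.filter (fun i => e i ≠ 0)).card : ℝ) = ρ * n ∧
        (∀ i ∈ S, e i = 0) ∧
        ∃ c' ∈ C, c' ≠ c ∧ (hammingDist (c + e) c' : ℝ) = (1 - α) * n)).card : ℝ)
      ≤ 2 ^ n * ((q : ℝ) - 1) ^ ((1 - δ - α) * n + 1) * ((q : ℝ) - 1) ^ (ρ * n) := by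
    classical
  have hq1 : (1:ℕ) ≤ q := by omega
  have hQ2 : (2:ℝ) ≤ (q:ℝ) - 1 := by
    have : (3:ℝ) ≤ (q:ℝ) := by exact_mod_cast hq
    linarith
  have hQ0 : (0:ℝ) < (q:ℝ) - 1 := by linarith
  set E := Finset.univ.filter (fun e : Fin n → ZMod q =>
        ((Finset.univ.filter (fun i => e i ≠ 0)).card : ℝ) = ρ * n ∧
        (∀ i ∈ S, e i = 0) ∧
        ∃ c' ∈ C, c' ≠ c ∧ (hammingDist (c + e) c' : ℝ) = (1 - α) * n) with hE
  rcases E.eq_empty_or_nonempty with hEe | ⟨e0, he0⟩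
  · rw [hEe]
    have h2 : (0:ℝ) ≤ ((q:ℝ)-1) ^ ((1 - δ - α) * n + 1) := Real.rpow_nonneg (by linarith) _
    have h3 : (0:ℝ) ≤ ((q:ℝ)-1) ^ (ρ * n) := Real.rpow_nonneg (by linarith) _
    have h1 : (0:ℝ) ≤ 2 ^ n := by positivity
    simpa using mul_nonneg (mul_nonneg h1 h2) h3
  · have hmemE : ∀ e ∈ E, ((Finset.univ.filter (fun i => e i ≠ 0)).card : ℝ) = ρ * n ∧
        (∀ i ∈ S, e i = 0) ∧
        ∃ c' ∈ C, c' ≠ c ∧ (hammingDist (c + e) c' : ℝ) = (1 - α) * n :=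
      fun e he => (mem_filter.mp he).2
    set cw : (Fin n → ZMod q) → (Fin n → ZMod q) := fun e =>
      if h : ∃ c', c' ∈ C ∧ c' ≠ c ∧ (hammingDist (c + e) c' : ℝ) = (1 - α) * n then h.choose
      else c with hcw
    have hcwspec : ∀ e ∈ E, cw e ∈ C ∧ cw e ≠ c ∧
        ((hammingDist (c + e) (cw e) : ℝ) = (1 - α) * n) := by
      intro e he
      obtain ⟨-, -, c', hc'C, hc'ne, hd⟩ := hmemE e he
      have hex : ∃ c', c' ∈ C ∧ c' ≠ c ∧ (hammingDist (c + e) c' : ℝ) = (1 - α) * n :=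
        ⟨c', hc'C, hc'ne, hd⟩
      rw [hcw]
      simp only [dif_pos hex]
      exact hex.choose_spec
    -- n positive
    have hn : 0 < n := by
      rcases Nat.eq_zero_or_pos n with h0 | h
      · exfalso
        obtain ⟨-, -, c', hc'C, hc'ne, -⟩ := hmemE e0 he0
        subst h0
        exact hc'ne (funext fun i => i.elim0)
      · exact h
    have hn0 : (0:ℝ) < (n:ℝ) := by exact_mod_cast hn
    -- w
    have hScard : S.card ≤ n := by
      simpa using card_le_univ S
    set w := n - S.card with hwdef
    have hw : (w:ℝ) = ρ * n := by
      rw [hwdef, Nat.cast_sub hScard, hS]; ring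
    have hSc : Sᶜ.card = w := by
      rw [card_compl, Fintype.card_fin]
    -- t
    set t := hammingDist (c + e0) (cw e0) with htdef
    have ht : (t:ℝ) = (1-α) * n := (hcwspec e0 he0).2.2
    have htall : ∀ e ∈ E, hammingDist (c + e) (cw e) = t := by
      intro e he
      have := ((hcwspec e he).2.2).trans ht.symm
      exact_mod_cast this
    -- d'
    set d' := ⌈δ * n⌉₊ with hd'def
    have hδnle : δ * n ≤ (d' : ℝ) := Nat.le_ceil _
    have hd'le : ∀ e ∈ E, d' ≤ hammingDist c (cw e) := by
      intro e he
      exact Nat.ceil_le.mpr (hdist c hc (cw e) (hcwspec e he).1 (Ne.symm (hcwspec e he).2.1))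
    have htd' : t + 1 ≤ d' := by
      have h1 : (t:ℝ) < δ * n := by
        rw [ht]; nlinarith
      have h2 : (t:ℝ) < (d':ℝ) := lt_of_lt_of_le h1 hδnle
      have : t < d' := by exact_mod_cast h2
      omega
    -- support
    have hsupp : ∀ e ∈ E, Finset.univ.filter (fun i => e i ≠ 0) = Sᶜ := by
      intro e he
      obtain ⟨hwcard, hzero, -⟩ := hmemE e he
      have hsub : Finset.univ.filter (fun i => e i ≠ 0) ⊆ Sᶜ := by
        intro i hi
        rw [mem_filter] at hi
        rw [mem_compl]
        intro hiS
        exact hi.2 (hzero i hiS)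
      have hcardeq : (Finset.univ.filter (fun i => e i ≠ 0)).card = w := by
        have : ((Finset.univ.filter (fun i => e i ≠ 0)).card : ℝ) = (w:ℝ) := by
          rw [hwcard, hw]
        exact_mod_cast this
      exact Finset.eq_of_subset_of_card_le hsub (by rw [hSc, hcardeq])
    have hnz : ∀ e ∈ E, ∀ i, i ∉ S → e i ≠ 0 := by
      intro e he i hi
      have h1 : i ∈ Finset.univ.filter (fun i => e i ≠ 0) := by
        rw [hsupp e he]; exact mem_compl.mpr hi
      exact (mem_filter.mp h1).2
    have hz : ∀ e ∈ E, ∀ i ∈ S, e i = 0 := fun e he => (hmemE e he).2.1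
    -- agreement set
    set A : (Fin n → ZMod q) → Finset (Fin n) :=
      fun e => Finset.univ.filter (fun i => (c + e) i = cw e i) with hA
    have hAcard : ∀ e ∈ E, (A e).card + t = n := by
      intro e he
      have h1 := Finset.card_filter_add_card_filter_not
        (s := (Finset.univ : Finset (Fin n))) (p := fun i => (c + e) i = cw e i)
      rw [card_univ, Fintype.card_fin] at h1
      have h2 : hammingDist (c + e) (cw e) =
          (Finset.univ.filter (fun i => ¬ ((c + e) i = cw e i))).card := rfl
      have h3 : (Finset.univ.filter (fun i => ¬ ((c + e) i = cw e i))).card = t :=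
        h2.symm.trans (htall e he)
      rw [h3] at h1
      simp only [hA]
      exact h1
    have hdistle : ∀ e ∈ E, hammingDist c (cw e) ≤ n := by
      intro e he
      have : (Finset.univ.filter (fun i => c i ≠ cw e i)).card ≤ (Finset.univ : Finset (Fin n)).card :=
        card_filter_le _ _
      simpa [hammingDist] using this
    have hGw : ∀ e ∈ E, (A e ∩ Sᶜ).card ≤ w := by
      intro e he
      exact le_trans (card_le_card inter_subset_right) (le_of_eq hSc)
    have hGlb : ∀ e ∈ E, d' - t ≤ (A e ∩ Sᶜ).card := by
      intro e he
      have h1 : (A e ∩ S).card + (A e \ S).card = (A e).card :=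
        card_inter_add_card_sdiff _ _
      have h1' : A e \ S = A e ∩ Sᶜ := sdiff_eq
      rw [h1'] at h1
      have h2 : A e ∩ S ⊆ Finset.univ.filter (fun i => c i = cw e i) := by
        intro i hi
        rw [mem_inter] at hi
        obtain ⟨hiA, hiS⟩ := hi
        rw [hA] at hiA
        simp only [mem_filter, mem_univ, true_and] at hiA
        rw [mem_filter]
        refine ⟨mem_univ _, ?_⟩
        have he0i : e i = 0 := hz e he i hiS
        simpa [Pi.add_apply, he0i] using hiA
      have h3 : (Finset.univ.filter (fun i => c i = cw e i)).card + hammingDist c (cw e) = n := by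
        have := Finset.card_filter_add_card_filter_not
          (s := (Finset.univ : Finset (Fin n))) (p := fun i => c i = cw e i)
        rw [card_univ, Fintype.card_fin] at this
        exact this
      have h4 : (A e ∩ S).card ≤ n - hammingDist c (cw e) := by
        have := card_le_card h2
        omega
      have h5 := hAcard e he
      have h6 := hd'le e he
      have h7 := hdistle e he
      omega
    -- fiberwise bound
    have hfiber : ∀ B ∈ (Finset.univ : Finset (Fin n)).powerset,
        (E.filter (fun e => A e = B)).card ≤ (q-1)^(w + t + 1 - d') := by
      intro B hB
      rcases (E.filter (fun e => A e = B)).eq_empty_or_nonempty with h0 | ⟨e1, he1⟩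
      · simp [h0]
      · have he1E : e1 ∈ E := (mem_filter.mp he1).1
        have he1B : A e1 = B := (mem_filter.mp he1).2
        have hG1 : d' - t ≤ (B ∩ Sᶜ).card := he1B ▸ hGlb e1 he1E
        have hG2 : (B ∩ Sᶜ).card ≤ w := he1B ▸ hGw e1 he1E
        set G := B ∩ Sᶜ with hGdef
        have hGsub : G ⊆ Sᶜ := inter_subset_right
        obtain ⟨H, hHG, hHcard⟩ := Finset.exists_subset_card_eq (s := G) (n := G.card - (d' - t - 1))
          (Nat.sub_le _ _)
        set K := (Sᶜ \ G) ∪ H with hKdef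
        have hKsub : K ⊆ Sᶜ := union_subset sdiff_subset (hHG.trans hGsub)
        have hKdisj : Disjoint (Sᶜ \ G) H :=
          Finset.disjoint_of_subset_right hHG sdiff_disjoint
        have hKcard : K.card = w + t + 1 - d' := by
          rw [hKdef, card_union_of_disjoint hKdisj, card_sdiff_of_subset hGsub, hSc, hHcard]
          omega
        calc (E.filter (fun e => A e = B)).card
            ≤ (K.pi (fun _ => ((Finset.univ : Finset (ZMod q)).erase 0))).card := by
              apply Finset.card_le_card_of_injOn (fun e => fun i _ => e i)
              · intro e he
                rw [Finset.mem_coe, Finset.mem_pi]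
                intro i hi
                refine mem_erase.mpr ⟨?_, mem_univ _⟩
                have hiSc : i ∉ S := by
                  have := hKsub hi; rwa [mem_compl] at this
                exact hnz e (mem_filter.mp he).1 i hiSc
              · intro x hx y hy hxy
                have hK : ∀ i ∈ K, x i = y i := fun i hi => congrFun (congrFun hxy i) hi
                simp only [Finset.mem_coe, mem_filter] at hx hy
                obtain ⟨hxE, hxB⟩ := hx
                obtain ⟨hyE, hyB⟩ := hy
                have hAx : ∀ i ∈ B, c i + x i = cw x i := by
                  intro i hi
                  rw [← hxB, hA] at hi
                  simpa using (mem_filter.mp hi).2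
                have hAy : ∀ i ∈ B, c i + y i = cw y i := by
                  intro i hi
                  rw [← hyB, hA] at hi
                  simpa using (mem_filter.mp hi).2
                by_cases hcc : cw x = cw y
                · funext i
                  by_cases hiS : i ∈ S
                  · rw [hz x hxE i hiS, hz y hyE i hiS]
                  · by_cases hiG : i ∈ G
                    · have hiB : i ∈ B := (mem_inter.mp hiG).1
                      have h1 := hAx i hiB
                      have h2 := hAy i hiB
                      rw [hcc] at h1
                      have := h1.trans h2.symm
                      exact add_left_cancel this
                    · exact hK i (mem_union_left _ (mem_sdiff.mpr ⟨mem_compl.mpr hiS, hiG⟩))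
                · exfalso
                  have hge : d' ≤ hammingDist (cw x) (cw y) :=
                    Nat.ceil_le.mpr (hdist (cw x) (hcwspec x hxE).1 (cw y) (hcwspec y hyE).1 hcc)
                  have hsub2 : Finset.univ.filter (fun i => cw x i ≠ cw y i) ⊆
                      ((Finset.univ : Finset (Fin n)) \ B) ∪ (G \ H) := by
                    intro i hi
                    have hine : cw x i ≠ cw y i := (mem_filter.mp hi).2
                    by_cases hiB : i ∈ B
                    · have h1 := hAx i hiB
                      have h2 := hAy i hiB
                      by_cases hiS : i ∈ S
                      · exfalso
                        rw [hz x hxE i hiS] at h1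
                        rw [hz y hyE i hiS] at h2
                        exact hine (h1.symm.trans h2)
                      · have hiG : i ∈ G := mem_inter.mpr ⟨hiB, mem_compl.mpr hiS⟩
                        by_cases hiH : i ∈ H
                        · exfalso
                          have hxy' : x i = y i := hK i (mem_union_right _ hiH)
                          rw [hxy'] at h1
                          exact hine (h1.symm.trans h2)
                        · exact mem_union_right _ (mem_sdiff.mpr ⟨hiG, hiH⟩)
                    · exact mem_union_left _ (mem_sdiff.mpr ⟨mem_univ _, hiB⟩)
                  have hle : hammingDist (cw x) (cw y) ≤
                      ((Finset.univ : Finset (Fin n)) \ B).card + (G \ H).card := by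
                    have h1 : hammingDist (cw x) (cw y) =
                        (Finset.univ.filter (fun i => cw x i ≠ cw y i)).card := rfl
                    rw [h1]
                    exact le_trans (card_le_card hsub2) (card_union_le _ _)
                  have h5 : ((Finset.univ : Finset (Fin n)) \ B).card = t := by
                    rw [card_sdiff_of_subset (subset_univ _), card_univ, Fintype.card_fin]
                    have := hAcard x hxE
                    rw [hxB] at this
                    omega
                  have h6 : (G \ H).card ≤ d' - t - 1 := by
                    rw [card_sdiff_of_subset hHG, hHcard]
                    omega
                  omega
          _ = (q-1)^(w + t + 1 - d') := by
              rw [Finset.card_pi]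
              have hcz : ((Finset.univ : Finset (ZMod q)).erase 0).card = q - 1 := by
                rw [card_erase_of_mem (mem_univ _), card_univ, ZMod.card]
              rw [Finset.prod_const, hcz, hKcard]
    -- summing over fibers
    have hsum : E.card ≤ 2^n * (q-1)^(w + t + 1 - d') := by
      rw [Finset.card_eq_sum_card_fiberwise
        (f := fun e => A e) (t := (Finset.univ : Finset (Fin n)).powerset)
        (fun e _ => mem_powerset.mpr (subset_univ (A e)))]
      calc ∑ B ∈ (Finset.univ : Finset (Fin n)).powerset, (E.filter (fun e => A e = B)).card
          ≤ ∑ B ∈ (Finset.univ : Finset (Fin n)).powerset, (q-1)^(w + t + 1 - d') :=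
            Finset.sum_le_sum hfiber
        _ = 2^n * (q-1)^(w + t + 1 - d') := by
            rw [Finset.sum_const, card_powerset, card_univ, Fintype.card_fin, smul_eq_mul]
    -- transfer to ℝ
    have hd'wt : d' ≤ w + t := by
      have h1 := hGlb e0 he0
      have h2 := hGw e0 he0
      omega
    have hNreal : ((w + t + 1 - d' : ℕ) : ℝ) = (w:ℝ) + (t:ℝ) + 1 - (d':ℝ) := by
      have hle : d' ≤ w + t + 1 := by omega
      push_cast [Nat.cast_sub hle]
      ring
    have hcast : (E.card : ℝ) ≤ 2^n * ((q:ℝ)-1) ^ (((w + t + 1 - d' : ℕ)):ℝ) := by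
      have h1 : (E.card : ℝ) ≤ ((2^n * (q-1)^(w + t + 1 - d') : ℕ) : ℝ) :=
        Nat.cast_le.mpr hsum
      rw [Nat.cast_mul, Nat.cast_pow, Nat.cast_pow, Nat.cast_ofNat,
        Nat.cast_sub hq1, Nat.cast_one] at h1
      rw [Real.rpow_natCast]
      exact h1
    have hexp : (((w + t + 1 - d' : ℕ)):ℝ) ≤ ((1 - δ - α) * n + 1) + ρ * n := by
      rw [hNreal]
      have h1 : (1 - δ - α) * n = (t:ℝ) - δ * n := by
        rw [ht]; ring
      linarith [hδnle, hw]
    have hmono : ((q:ℝ)-1) ^ (((w + t + 1 - d' : ℕ)):ℝ) ≤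
        ((q:ℝ)-1) ^ (((1 - δ - α) * n + 1) + ρ * n) :=
      Real.rpow_le_rpow_of_exponent_le (by linarith) hexp
    have hsplit : ((q:ℝ)-1) ^ (((1 - δ - α) * n + 1) + ρ * n) =
        ((q:ℝ)-1) ^ ((1 - δ - α) * n + 1) * ((q:ℝ)-1) ^ (ρ * n) :=
      Real.rpow_add hQ0 _ _
    calc (E.card : ℝ) ≤ 2^n * ((q:ℝ)-1) ^ (((w + t + 1 - d' : ℕ)):ℝ) := hcast
      _ ≤ 2^n * ((q:ℝ)-1) ^ (((1 - δ - α) * n + 1) + ρ * n) := by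
          have h2 : (0:ℝ) ≤ 2^n := by positivity
          exact mul_le_mul_of_nonneg_left hmono h2
      _ = 2 ^ n * ((q : ℝ) - 1) ^ ((1 - δ - α) * n + 1) * ((q : ℝ) - 1) ^ (ρ * n) := by
          rw [hsplit, mul_assoc]
end

section
/- Let 0 < ε, δ < 1, let n ≥ 3/ε, and let q ≥ 2^{6/ε}. Let C be a code over alphabet Σ = {0,...,q−1} of block length n with minimum distance at least δn, let ρ ≤ δ − ε, and let S ⊆ [n] with |S| = (1−ρ)n. Then for every codeword c ∈ C, the fraction of error patterns e ∈ Σ^n with wt(e) = ρn and supp(e) ⊆ [n]∖S for which some codeword c' ≠ c lies within Hamming distance ρn of c + e is at most q^{−εn/6}. -/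
open Finset

private lemma choose_le_two_pow' (n k : ℕ) : n.choose k ≤ 2 ^ n := by
  rcases le_or_gt k n with h | h
  · calc n.choose k ≤ ∑ i ∈ Finset.range (n+1), n.choose i :=
        Finset.single_le_sum (fun _ _ => Nat.zero_le _)
          (Finset.mem_range.mpr (Nat.lt_succ_of_le h))
    _ = 2 ^ n := Nat.sum_range_choose n
  · simp [Nat.choose_eq_zero_of_lt h]

/-- Theorem 1(a): for any code of minimum distance `δn` over an alphabet
of size `q ≥ 2^{6/ε}`, any error-location set and any codeword, the fraction of error
patterns of weight `ρn` (with `ρ ≤ δ−ε`) supported on those locations for which some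
other codeword lies within distance `ρn` of the received word is at most `q^{−εn/6}`. -/
theorem stmt_6 (q n : ℕ) [NeZero q] (δ ε ρ : ℝ)
    (hδ : 0 < δ) (hδ1 : δ < 1) (hε : 0 < ε) (hε1 : ε < 1)
    (hn : (3 : ℝ) / ε ≤ n) (hq : (2 : ℝ) ^ (6 / ε) ≤ q)
    (hρ0 : 0 ≤ ρ) (hρ : ρ ≤ δ - ε)
    (C : Finset (Fin n → ZMod q))
    (hdist : ∀ c ∈ C, ∀ c' ∈ C, c ≠ c' → δ * n ≤ (hammingDist c c' : ℝ))
    (S : Finset (Fin n)) (hS : (S.card : ℝ) = (1 - ρ) * n)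
    (c : Fin n → ZMod q) (hc : c ∈ C) :
    ((Finset.univ.filter (fun e : Fin n → ZMod q =>
        ((Finset.univ.filter (fun i => e i ≠ 0)).card : ℝ) = ρ * n ∧
        (∀ i ∈ S, e i = 0) ∧
        ∃ c' ∈ C, c' ≠ c ∧ (hammingDist (c + e) c' : ℝ) ≤ ρ * n)).card : ℝ)
      ≤ (q : ℝ) ^ (-(ε * n) / 6) *
        ((Finset.univ.filter (fun e : Fin n → ZMod q =>
          ((Finset.univ.filter (fun i => e i ≠ 0)).card : ℝ) = ρ * n ∧
          (∀ i ∈ S, e i = 0))).card : ℝ) := by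
  classical
  -- ### numeric preliminaries
  have hεn3 : (3 : ℝ) ≤ ε * n := by
    have := (div_le_iff₀ hε).mp hn
    nlinarith
  have hn0 : (0 : ℝ) < n := by nlinarith
  have hnn : 0 < n := by exact_mod_cast hn0
  have hq2 : (2 : ℝ) ≤ (q : ℝ) := by
    refine le_trans ?_ hq
    nth_rewrite 1 [show (2:ℝ) = (2:ℝ) ^ (1:ℝ) by norm_num]
    refine Real.rpow_le_rpow_of_exponent_le one_le_two ?_
    rw [le_div_iff₀ hε]; linarith
  have hq1 : (1 : ℝ) < (q : ℝ) := by linarith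
  have hq0 : (0 : ℝ) < (q : ℝ) := by linarith
  have hqn2 : 2 ≤ q := by exact_mod_cast hq2
  have h2rpow : (2 : ℝ) ≤ (q : ℝ) ^ ((ε/6 : ℝ)) := by
    have h1 : ((2:ℝ) ^ ((6/ε):ℝ)) ^ ((ε/6):ℝ) ≤ (q:ℝ) ^ ((ε/6):ℝ) :=
      Real.rpow_le_rpow (Real.rpow_nonneg (by norm_num) _) hq (by positivity)
    have h2 : ((6:ℝ)/ε) * (ε/6) = 1 := by field_simp
    rwa [← Real.rpow_mul (by norm_num), h2, Real.rpow_one] at h1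
  -- ### basic set-up
  have hScard : S.card ≤ n := by
    simpa using card_le_card (subset_univ S)
  set t : ℕ := n - S.card with htdef
  have hst : S.card + t = n := by omega
  have htn : t ≤ n := by omega
  have htR : (t : ℝ) = ρ * n := by
    have h1 : (t : ℝ) = (n : ℝ) - S.card := by
      rw [htdef, Nat.cast_sub hScard]
    rw [h1, hS]; ring
  have hTcard : Sᶜ.card = t := by
    rw [card_compl, Fintype.card_fin]
  set d0 : ℕ := ⌈ε * n⌉₊ with hd0def
  have hd0R : ε * n ≤ (d0 : ℝ) := Nat.le_ceil _
  have hd03 : 3 ≤ d0 := by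
    have : (3:ℝ) ≤ (d0 : ℝ) := le_trans hεn3 hd0R
    exact_mod_cast this
  -- splitting a filter over `S` and `Sᶜ`
  have hsplit : ∀ (p : Fin n → Prop) (_ : DecidablePred p),
      (univ.filter p).card = (S.filter p).card + (Sᶜ.filter p).card := by
    intro p hp
    rw [← card_union_of_disjoint (disjoint_filter_filter disjoint_compl_right),
      ← filter_union, union_compl]
  have hDist : ∀ x y : Fin n → ZMod q,
      hammingDist x y = (univ.filter (fun i => x i ≠ y i)).card := by
    intro x y; rfl
  -- minimum `S`-distance between distinct codewords is at least `d0`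
  have hsep : ∀ c₁ ∈ C, ∀ c₂ ∈ C, c₁ ≠ c₂ →
      d0 ≤ (S.filter (fun i => c₁ i ≠ c₂ i)).card := by
    intro c₁ h₁ c₂ h₂ hne
    have hd := hdist c₁ h₁ c₂ h₂ hne
    rw [hDist] at hd
    rw [hsplit (fun i => c₁ i ≠ c₂ i) _] at hd
    have hcompl : (Sᶜ.filter (fun i => c₁ i ≠ c₂ i)).card ≤ t := by
      rw [← hTcard]; exact card_filter_le _ _
    have hδρ : ε * n ≤ δ * n - ρ * n := by nlinarith
    have : ε * n ≤ ((S.filter (fun i => c₁ i ≠ c₂ i)).card : ℝ) := by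
      push_cast at hd ⊢
      have : ((Sᶜ.filter (fun i => c₁ i ≠ c₂ i)).card : ℝ) ≤ (t:ℝ) := by
        exact_mod_cast hcompl
      rw [htR] at this
      linarith
    exact Nat.ceil_le.mpr this
  -- ### characterisation of the set of admissible error patterns
  set F : Fin n → Finset (ZMod q) :=
    (fun i => if i ∈ S then ({0} : Finset (ZMod q)) else Finset.univ.erase 0) with hFdef
  have hFS : ∀ i ∈ S, F i = {0} := by intro i hi; simp [hFdef, hi]
  have hFT : ∀ i ∉ S, F i = Finset.univ.erase 0 := by intro i hi; simp [hFdef, hi]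
  have hAllchar : (Finset.univ.filter (fun e : Fin n → ZMod q =>
          ((Finset.univ.filter (fun i => e i ≠ 0)).card : ℝ) = ρ * n ∧
          (∀ i ∈ S, e i = 0))) = Fintype.piFinset F := by
    ext e
    simp only [mem_filter, mem_univ, true_and, Fintype.mem_piFinset]
    constructor
    · rintro ⟨hw, hz⟩
      have hwcard : (univ.filter (fun i => e i ≠ 0)).card = t := by
        have : ((univ.filter (fun i => e i ≠ 0)).card : ℝ) = (t : ℝ) := by rw [hw, htR]
        exact_mod_cast this
      have hsub : (univ.filter (fun i => e i ≠ 0)) ⊆ Sᶜ := by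
        intro i hi
        rw [mem_compl]
        intro hiS
        exact (mem_filter.mp hi).2 (hz i hiS)
      have hsup : (univ.filter (fun i => e i ≠ 0)) = Sᶜ :=
        eq_of_subset_of_card_le hsub (by rw [hTcard, hwcard])
      intro i
      by_cases hiS : i ∈ S
      · rw [hFS i hiS, mem_singleton]; exact hz i hiS
      · rw [hFT i hiS]
        refine mem_erase.mpr ⟨?_, mem_univ _⟩
        have : i ∈ (univ.filter (fun i => e i ≠ 0)) := by
          rw [hsup, mem_compl]; exact hiS
        exact (mem_filter.mp this).2
    · intro h
      have hz : ∀ i ∈ S, e i = 0 := by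
        intro i hi
        have := h i; rw [hFS i hi, mem_singleton] at this; exact this
      have hnz : ∀ i ∉ S, e i ≠ 0 := by
        intro i hi
        have := h i; rw [hFT i hi] at this
        exact (mem_erase.mp this).1
      have hsup : (univ.filter (fun i => e i ≠ 0)) = Sᶜ := by
        ext i
        simp only [mem_filter, mem_univ, true_and, mem_compl]
        constructor
        · intro hne hiS; exact hne (hz i hiS)
        · intro hiS; exact hnz i hiS
      refine ⟨?_, hz⟩
      rw [hsup, hTcard, htR]
  have hAllcard : (Fintype.piFinset F).card = (q-1)^t := by
    rw [Fintype.card_piFinset]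
    have hcards : ∀ i, (F i).card = if i ∈ S then 1 else (q-1) := by
      intro i
      by_cases hi : i ∈ S
      · rw [hFS i hi, if_pos hi, card_singleton]
      · rw [hFT i hi, if_neg hi, card_erase_of_mem (mem_univ _), card_univ, ZMod.card]
    calc ∏ i, (F i).card
        = (∏ i ∈ S, (F i).card) * ∏ i ∈ Sᶜ, (F i).card := (prod_mul_prod_compl S _).symm
      _ = 1 * (q-1)^t := by
          congr 1
          · refine prod_eq_one ?_
            intro i hi; rw [hcards i, if_pos hi]
          · rw [← hTcard]
            refine Eq.trans (prod_congr rfl ?_) (prod_const _)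
            intro i hi
            rw [hcards i, if_neg (mem_compl.mp hi)]
      _ = (q-1)^t := one_mul _
  -- ### union bound set-up
  set aS : (Fin n → ZMod q) → ℕ := fun c' => (S.filter (fun i => c i ≠ c' i)).card with haSdef
  set W : Finset (Fin n → ZMod q) := C.filter (fun c' => c' ≠ c ∧ aS c' ≤ t) with hWdef
  set Bv : (Fin n → ZMod q) → Finset (Fin n → ZMod q) :=
    (fun c' => (Fintype.piFinset F).filter (fun e => hammingDist (c + e) c' ≤ t)) with hBvdef
  have hBadsub : (Finset.univ.filter (fun e : Fin n → ZMod q =>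
        ((Finset.univ.filter (fun i => e i ≠ 0)).card : ℝ) = ρ * n ∧
        (∀ i ∈ S, e i = 0) ∧
        ∃ c' ∈ C, c' ≠ c ∧ (hammingDist (c + e) c' : ℝ) ≤ ρ * n)) ⊆ W.biUnion Bv := by
    intro e he
    obtain ⟨-, hw, hz, c', hc'C, hne, hdR⟩ := mem_filter.mp he
    have hepi : e ∈ Fintype.piFinset F := by
      rw [← hAllchar]
      exact mem_filter.mpr ⟨mem_univ e, hw, hz⟩
    have hdnat : hammingDist (c + e) c' ≤ t := by
      rw [← htR] at hdR
      exact_mod_cast hdR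
    have haS : aS c' ≤ hammingDist (c + e) c' := by
      rw [hDist, haSdef]
      refine card_le_card ?_
      intro i hi
      obtain ⟨hiS, hine⟩ := mem_filter.mp hi
      refine mem_filter.mpr ⟨mem_univ _, ?_⟩
      have : (c + e) i = c i := by simp [hz i hiS]
      rw [this]; exact hine
    refine mem_biUnion.mpr ⟨c', ?_, ?_⟩
    · exact mem_filter.mpr ⟨hc'C, hne, le_trans haS hdnat⟩
    · exact mem_filter.mpr ⟨hepi, hdnat⟩
  -- ### counting error patterns confusable with a fixed codeword
  have hBv : ∀ c' ∈ W, (Bv c').card ≤ t.choose (aS c') * (q-1)^(t - aS c') := by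
    intro c' hc'W
    obtain ⟨hc'C, hne, hat⟩ := mem_filter.mp hc'W
    set a := aS c' with ha
    have hsub : Bv c' ⊆ (Sᶜ.powersetCard a).biUnion (fun A => Fintype.piFinset
        (fun i => if i ∈ A then ({c' i - c i} : Finset (ZMod q)) else F i)) := by
      intro e he
      obtain ⟨hepi, hdle⟩ := mem_filter.mp he
      have hepi' : ∀ i, e i ∈ F i := Fintype.mem_piFinset.mp hepi
      have hz : ∀ i ∈ S, e i = 0 := by
        intro i hi
        have := hepi' i; rw [hFS i hi, mem_singleton] at this; exact this
      have hdle' : (S.filter (fun i => (c + e) i ≠ c' i)).card +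
          (Sᶜ.filter (fun i => (c + e) i ≠ c' i)).card ≤ t := by
        have h0 := hsplit (fun i => (c + e) i ≠ c' i) (by infer_instance)
        rw [hDist] at hdle
        omega
      have hS_part : (S.filter (fun i => (c + e) i ≠ c' i)) =
          S.filter (fun i => c i ≠ c' i) := by
        refine filter_congr ?_
        intro i hi
        have : (c + e) i = c i := by simp [hz i hi]
        rw [this]
      have haG : a ≤ (Sᶜ.filter (fun i => c i + e i = c' i)).card := by
        have hT_part : t ≤ (Sᶜ.filter (fun i => (c + e) i ≠ c' i)).card +
            (Sᶜ.filter (fun i => c i + e i = c' i)).card := by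
          rw [← hTcard]
          refine le_trans (card_le_card ?_) (card_union_le _ _)
          intro i hi
          by_cases hh : c i + e i = c' i
          · exact mem_union_right _ (mem_filter.mpr ⟨hi, hh⟩)
          · refine mem_union_left _ (mem_filter.mpr ⟨hi, ?_⟩)
            show ¬ ((c + e) i = c' i)
            exact hh
        have h2 : (S.filter (fun i => (c + e) i ≠ c' i)).card = a := by
          rw [hS_part, ha, haSdef]
        omega
      obtain ⟨A, hAG, hAcard⟩ := exists_subset_card_eq haG
      refine mem_biUnion.mpr ⟨A, ?_, ?_⟩
      · exact mem_powersetCard.mpr ⟨hAG.trans (filter_subset _ _), hAcard⟩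
      · refine Fintype.mem_piFinset.mpr ?_
        intro i
        by_cases hiA : i ∈ A
        · rw [if_pos hiA, mem_singleton]
          exact eq_sub_of_add_eq' (mem_filter.mp (hAG hiA)).2
        · rw [if_neg hiA]; exact hepi' i
    have hfib : ∀ A ∈ Sᶜ.powersetCard a, (Fintype.piFinset
        (fun i => if i ∈ A then ({c' i - c i} : Finset (ZMod q)) else F i)).card
          = (q-1)^(t-a) := by
      intro A hA
      obtain ⟨hAT, hAcard⟩ := mem_powersetCard.mp hA
      have hAS : Disjoint A S := by
        rw [disjoint_left]
        intro i hiA hiS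
        exact (mem_compl.mp (hAT hiA)) hiS
      have hUn : (A ∪ S).card ≤ n := by simpa using card_le_card (subset_univ (A ∪ S))
      have hUcard : (A ∪ S).card = a + S.card := by
        rw [card_union_of_disjoint hAS, hAcard]
      rw [Fintype.card_piFinset]
      calc ∏ i, (if i ∈ A then ({c' i - c i} : Finset (ZMod q)) else F i).card
          = (∏ i ∈ (A ∪ S), (if i ∈ A then ({c' i - c i} : Finset (ZMod q)) else F i).card) *
            ∏ i ∈ (A ∪ S)ᶜ, (if i ∈ A then ({c' i - c i} : Finset (ZMod q)) else F i).card :=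
            (prod_mul_prod_compl _ _).symm
        _ = 1 * (q-1)^((A ∪ S)ᶜ.card) := by
            congr 1
            · refine prod_eq_one ?_
              intro i hi
              by_cases hiA : i ∈ A
              · rw [if_pos hiA, card_singleton]
              · have hiS : i ∈ S := by
                  rcases mem_union.mp hi with h | h
                  · exact absurd h hiA
                  · exact h
                rw [if_neg hiA, hFS i hiS, card_singleton]
            · refine Eq.trans (prod_congr rfl ?_) (prod_const _)
              intro i hi
              have hiU := mem_compl.mp hi
              have hiA : i ∉ A := fun h => hiU (mem_union_left _ h)
              have hiS : i ∉ S := fun h => hiU (mem_union_right _ h)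
              rw [if_neg hiA, hFT i hiS, card_erase_of_mem (mem_univ _), card_univ, ZMod.card]
        _ = (q-1)^(t-a) := by
            rw [one_mul, card_compl, Fintype.card_fin, hUcard]
            congr 1
            omega
    calc (Bv c').card ≤ _ := card_le_card hsub
      _ ≤ ∑ A ∈ Sᶜ.powersetCard a, (Fintype.piFinset
          (fun i => if i ∈ A then ({c' i - c i} : Finset (ZMod q)) else F i)).card :=
        card_biUnion_le
      _ = ∑ A ∈ Sᶜ.powersetCard a, (q-1)^(t-a) := sum_congr rfl hfib
      _ = t.choose a * (q-1)^(t-a) := by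
        rw [sum_const, card_powersetCard, hTcard, smul_eq_mul]
  -- ### choice of a canonical (d0-1)-subset of each finset
  have hKex : ∀ D : Finset (Fin n), ∃ K, K ⊆ D ∧ (d0 - 1 ≤ D.card → K.card = d0 - 1) := by
    intro D
    by_cases h : d0 - 1 ≤ D.card
    · obtain ⟨K, hK1, hK2⟩ := exists_subset_card_eq h
      exact ⟨K, hK1, fun _ => hK2⟩
    · exact ⟨∅, empty_subset _, fun hh => absurd hh h⟩
  choose K hKsub hKcard using hKex
  -- ### counting codewords at `S`-distance `a` from `c`
  have hWa : ∀ a ∈ Icc d0 t, (W.filter (fun c' => aS c' = a)).card ≤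
      S.card.choose a * q ^ (a - (d0 - 1)) := by
    intro a hmem
    obtain ⟨had0, hat⟩ := mem_Icc.mp hmem
    have hcard : ((S.powersetCard a).sigma (fun D => Fintype.piFinset
        (fun i => if i ∈ D \ K D then (univ : Finset (ZMod q)) else {0}))).card
        = S.card.choose a * q ^ (a - (d0 - 1)) := by
      rw [Finset.card_sigma]
      have hfib2 : ∀ D ∈ S.powersetCard a, (Fintype.piFinset
          (fun i => if i ∈ D \ K D then (univ : Finset (ZMod q)) else {0})).card
            = q ^ (a - (d0 - 1)) := by
        intro D hD
        obtain ⟨hDS, hDcard⟩ := mem_powersetCard.mp hD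
        have hKc : (K D).card = d0 - 1 := hKcard D (by omega)
        have hsd : (D \ K D).card = a - (d0 - 1) := by
          rw [card_sdiff_of_subset (hKsub D), hKc, hDcard]
        rw [Fintype.card_piFinset]
        calc ∏ i, (if i ∈ D \ K D then (univ : Finset (ZMod q)) else {0}).card
            = (∏ i ∈ (D \ K D), (if i ∈ D \ K D then (univ : Finset (ZMod q)) else {0}).card) *
              ∏ i ∈ (D \ K D)ᶜ, (if i ∈ D \ K D then (univ : Finset (ZMod q)) else {0}).card :=
              (prod_mul_prod_compl _ _).symm
          _ = q ^ (a - (d0 - 1)) * 1 := by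
              congr 1
              · calc (∏ i ∈ (D \ K D), (if i ∈ D \ K D then (univ : Finset (ZMod q)) else {0}).card)
                    = ∏ _i ∈ (D \ K D), q :=
                      prod_congr rfl (fun i hi => by rw [if_pos hi, card_univ, ZMod.card])
                  _ = q ^ (a - (d0 - 1)) := by rw [prod_const, hsd]
              · refine prod_eq_one ?_
                intro i hi
                rw [if_neg (mem_compl.mp hi), card_singleton]
          _ = q ^ (a - (d0 - 1)) := mul_one _
      rw [sum_congr rfl hfib2, sum_const, card_powersetCard, smul_eq_mul]
    refine le_trans (card_le_card_of_injOn
      (fun c' => (⟨S.filter (fun i => c i ≠ c' i),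
        fun i => if i ∈ (S.filter (fun i => c i ≠ c' i)) \ K (S.filter (fun i => c i ≠ c' i))
          then c' i else 0⟩ : (_ : Finset (Fin n)) × (Fin n → ZMod q))) ?_ ?_) (le_of_eq hcard)
    · intro c' hc'mem
      obtain ⟨hc'W, hc'a⟩ := mem_filter.mp hc'mem
      refine mem_sigma.mpr ⟨?_, ?_⟩
      · exact mem_powersetCard.mpr ⟨filter_subset _ _, hc'a⟩
      · refine Fintype.mem_piFinset.mpr ?_
        intro i
        by_cases hi : i ∈ (S.filter (fun i => c i ≠ c' i)) \ K (S.filter (fun i => c i ≠ c' i))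
        · simp only [if_pos hi]; exact mem_univ _
        · simp only [if_neg hi]; exact mem_singleton_self _
    · intro c₁ h₁ c₂ h₂ heq
      obtain ⟨hc₁W, hc₁a⟩ := mem_filter.mp (mem_coe.mp h₁)
      obtain ⟨hc₂W, hc₂a⟩ := mem_filter.mp (mem_coe.mp h₂)
      have hc₁C : c₁ ∈ C := (mem_filter.mp hc₁W).1
      have hc₂C : c₂ ∈ C := (mem_filter.mp hc₂W).1
      obtain ⟨hD, hfheq⟩ := Sigma.mk.inj_iff.mp heq
      have hf : (fun i => if i ∈ (S.filter (fun i => c i ≠ c₁ i)) \ K (S.filter (fun i => c i ≠ c₁ i))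
          then c₁ i else 0) = (fun i => if i ∈ (S.filter (fun i => c i ≠ c₂ i)) \ K (S.filter (fun i => c i ≠ c₂ i))
          then c₂ i else 0) := eq_of_heq hfheq
      by_contra hne12
      have hd0le := hsep c₁ hc₁C c₂ hc₂C hne12
      have hsubK : S.filter (fun i => c₁ i ≠ c₂ i) ⊆ K (S.filter (fun i => c i ≠ c₁ i)) := by
        intro i hi
        obtain ⟨hiS, hine⟩ := mem_filter.mp hi
        have hiD : i ∈ S.filter (fun i => c i ≠ c₁ i) := by
          by_contra hiD
          have h1 : c i = c₁ i := by
            by_contra hcc; exact hiD (mem_filter.mpr ⟨hiS, hcc⟩)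
          have hiD2 : i ∉ S.filter (fun i => c i ≠ c₂ i) := by rw [← hD]; exact hiD
          have h2 : c i = c₂ i := by
            by_contra hcc; exact hiD2 (mem_filter.mpr ⟨hiS, hcc⟩)
          exact hine (h1 ▸ h2 ▸ rfl)
        by_contra hiK
        have hmemsd : i ∈ (S.filter (fun i => c i ≠ c₁ i)) \ K (S.filter (fun i => c i ≠ c₁ i)) :=
          mem_sdiff.mpr ⟨hiD, hiK⟩
        have hcf := congrFun hf i
        rw [← hD] at hcf
        rw [if_pos hmemsd, if_pos hmemsd] at hcf
        exact hine hcf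
      have hle1 := card_le_card hsubK
      have hKc : (K (S.filter (fun i => c i ≠ c₁ i))).card = d0 - 1 := by
        refine hKcard _ ?_
        have : (S.filter (fun i => c i ≠ c₁ i)).card = a := hc₁a
        omega
      omega
  -- ### assembling the counting bound
  have hmaps : ∀ c' ∈ W, aS c' ∈ Icc d0 t := by
    intro c' hc'
    obtain ⟨hc'C, hne, hat⟩ := mem_filter.mp hc'
    exact mem_Icc.mpr ⟨hsep c hc c' hc'C (Ne.symm hne), hat⟩
  have hBadfib : (Finset.univ.filter (fun e : Fin n → ZMod q =>
        ((Finset.univ.filter (fun i => e i ≠ 0)).card : ℝ) = ρ * n ∧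
        (∀ i ∈ S, e i = 0) ∧
        ∃ c' ∈ C, c' ≠ c ∧ (hammingDist (c + e) c' : ℝ) ≤ ρ * n)).card
      ≤ ∑ a ∈ Icc d0 t, ∑ c' ∈ W.filter (fun c' => aS c' = a),
          t.choose a * (q-1)^(t - a) := by
    calc _ ≤ (W.biUnion Bv).card := card_le_card hBadsub
      _ ≤ ∑ c' ∈ W, (Bv c').card := card_biUnion_le
      _ ≤ ∑ c' ∈ W, t.choose (aS c') * (q-1)^(t - aS c') := sum_le_sum hBv
      _ = ∑ a ∈ Icc d0 t, ∑ c' ∈ W.filter (fun c' => aS c' = a),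
            t.choose a * (q-1)^(t - a) :=
          (sum_fiberwise_of_maps_to' hmaps (fun a => t.choose a * (q-1)^(t - a))).symm
  -- characterisation of the denominator
  have hAllcount : ((Finset.univ.filter (fun e : Fin n → ZMod q =>
      ((Finset.univ.filter (fun i => e i ≠ 0)).card : ℝ) = ρ * n ∧
      (∀ i ∈ S, e i = 0))).card : ℝ) = ((q : ℝ) - 1) ^ t := by
    have hq1' : 1 ≤ q := le_trans one_le_two hqn2
    rw [hAllchar, hAllcard]
    rw [Nat.cast_pow, Nat.cast_sub hq1', Nat.cast_one]
  rw [hAllcount]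
  by_cases hd0t : d0 ≤ t
  · -- main case
    have hterm : ∀ a ∈ Icc d0 t, ∑ c' ∈ W.filter (fun c' => aS c' = a),
        t.choose a * (q-1)^(t-a) ≤ 2 ^ n * q ^ (t - (d0 - 1)) := by
      intro a hmem
      obtain ⟨had0, hat⟩ := mem_Icc.mp hmem
      rw [sum_const, smul_eq_mul]
      calc (W.filter (fun c' => aS c' = a)).card * (t.choose a * (q-1)^(t-a))
          ≤ (S.card.choose a * q ^ (a - (d0-1))) * (t.choose a * (q-1)^(t-a)) :=
            Nat.mul_le_mul_right _ (hWa a hmem)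
        _ ≤ (2 ^ S.card * q ^ (a - (d0-1))) * (2 ^ t * q^(t-a)) :=
            Nat.mul_le_mul (Nat.mul_le_mul_right _ (choose_le_two_pow' _ _))
              (Nat.mul_le_mul (choose_le_two_pow' _ _) (Nat.pow_le_pow_left (Nat.sub_le q 1) _))
        _ = 2 ^ n * q ^ (t - (d0 - 1)) := by
            have hexp : (a - (d0-1)) + (t-a) = t - (d0-1) := by clear hBv hWa hBadfib; omega
            rw [mul_mul_mul_comm, ← pow_add, ← pow_add, hst, hexp]
    have hBadN : (Finset.univ.filter (fun e : Fin n → ZMod q =>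
        ((Finset.univ.filter (fun i => e i ≠ 0)).card : ℝ) = ρ * n ∧
        (∀ i ∈ S, e i = 0) ∧
        ∃ c' ∈ C, c' ≠ c ∧ (hammingDist (c + e) c' : ℝ) ≤ ρ * n)).card
        ≤ (n + 1) * (2 ^ n * q ^ (t - (d0 - 1))) := by
      refine le_trans hBadfib (le_trans (sum_le_sum hterm) ?_)
      rw [sum_const, smul_eq_mul, Nat.card_Icc]
      have hle : t + 1 - d0 ≤ n + 1 := by clear hBv hWa hBadfib hterm; omega
      exact Nat.mul_le_mul_right _ hle
    have hcast : ((Finset.univ.filter (fun e : Fin n → ZMod q =>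
        ((Finset.univ.filter (fun i => e i ≠ 0)).card : ℝ) = ρ * n ∧
        (∀ i ∈ S, e i = 0) ∧
        ∃ c' ∈ C, c' ≠ c ∧ (hammingDist (c + e) c' : ℝ) ≤ ρ * n)).card : ℝ)
        ≤ ((n:ℝ) + 1) * ((2:ℝ) ^ n * ((q:ℝ)) ^ (t - (d0 - 1))) := by
      exact_mod_cast hBadN
    refine le_trans hcast ?_
    -- ### the real-number estimate
    have h2n : (2:ℝ) ^ n ≤ (q:ℝ) ^ ((ε * n / 6 : ℝ)) := by
      calc (2:ℝ) ^ n ≤ ((q:ℝ) ^ ((ε/6 : ℝ))) ^ n :=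
            pow_le_pow_left₀ (by norm_num) h2rpow n
        _ = (q:ℝ) ^ ((ε/6 * n : ℝ)) := by
            rw [← Real.rpow_natCast ((q:ℝ) ^ ((ε/6:ℝ))) n, ← Real.rpow_mul hq0.le]
        _ = (q:ℝ) ^ ((ε * n / 6 : ℝ)) := by
            rw [show (ε/6) * (n:ℝ) = ε * n / 6 by ring]
    have hn1 : ((n:ℝ) + 1) ≤ (q:ℝ) ^ ((ε * n / 6 : ℝ)) := by
      refine le_trans ?_ h2n
      have : n + 1 ≤ 2 ^ n := Nat.succ_le_of_lt (Nat.lt_two_pow_self (n := n))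
      exact_mod_cast this
    have h2t : (2:ℝ) ^ t ≤ (q:ℝ) ^ ((ε * n / 6 : ℝ)) := by
      refine le_trans ?_ h2n
      exact pow_le_pow_right₀ one_le_two htn
    have hd0exp : (q:ℝ) ^ ((4 * (ε * n) / 6 : ℝ)) ≤ (q:ℝ) ^ ((d0 - 1 : ℕ)) := by
      have hd01 : 1 ≤ d0 := by clear * - hd03; omega
      rw [← Real.rpow_natCast (q:ℝ) (d0 - 1), Nat.cast_sub hd01, Nat.cast_one]
      refine Real.rpow_le_rpow_of_exponent_le hq1.le ?_
      linarith
    rw [neg_div, Real.rpow_neg hq0.le,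
      le_inv_mul_iff₀ (Real.rpow_pos_of_pos hq0 _)]
    have hQ1t : ((q:ℝ)/2) ^ t ≤ ((q:ℝ) - 1) ^ t :=
      pow_le_pow_left₀ (by positivity) (by linarith) t
    refine le_trans ?_ hQ1t
    rw [div_pow, le_div_iff₀ (by positivity)]
    have hQt : ((q:ℝ)) ^ t = (q:ℝ) ^ (t - (d0 - 1)) * (q:ℝ) ^ ((d0 - 1 : ℕ)) := by
      rw [← pow_add]
      congr 1
      clear * - hd0t hd03 htn
      omega
    rw [hQt]
    calc (q:ℝ) ^ ((ε * n / 6 : ℝ)) * (((n:ℝ) + 1) * ((2:ℝ)^n * (q:ℝ) ^ (t - (d0-1)))) * (2:ℝ)^t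
        = (q:ℝ) ^ (t - (d0-1)) *
          ((q:ℝ) ^ ((ε * n / 6 : ℝ)) * (((n:ℝ) + 1) * ((2:ℝ)^n * (2:ℝ)^t))) := by ring
      _ ≤ (q:ℝ) ^ (t - (d0-1)) *
          ((q:ℝ) ^ ((ε * n / 6 : ℝ)) * ((q:ℝ) ^ ((ε * n / 6 : ℝ)) *
            ((q:ℝ) ^ ((ε * n / 6 : ℝ)) * (q:ℝ) ^ ((ε * n / 6 : ℝ))))) := by
          refine mul_le_mul_of_nonneg_left ?_ (by positivity)
          refine mul_le_mul_of_nonneg_left ?_ (by positivity)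
          refine mul_le_mul hn1 ?_ (by positivity) (by positivity)
          exact mul_le_mul h2n h2t (by positivity) (by positivity)
      _ = (q:ℝ) ^ (t - (d0-1)) * (q:ℝ) ^ ((4 * (ε * n) / 6 : ℝ)) := by
          rw [← Real.rpow_add hq0, ← Real.rpow_add hq0, ← Real.rpow_add hq0]
          congr 1
          ring
      _ ≤ (q:ℝ) ^ (t - (d0-1)) * (q:ℝ) ^ ((d0 - 1 : ℕ)) :=
          mul_le_mul_of_nonneg_left hd0exp (by positivity)
  · -- degenerate case: there are no admissible distances, so the bad set is empty
    rw [Icc_eq_empty hd0t, sum_empty, Nat.le_zero] at hBadfib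
    rw [hBadfib]
    push_cast
    have h1 : (0:ℝ) ≤ (q:ℝ) ^ ((-(ε * ↑n) / 6 : ℝ)) := Real.rpow_nonneg hq0.le _
    have h2 : (0:ℝ) ≤ ((q:ℝ) - 1) ^ t := pow_nonneg (by linarith) t
    exact mul_nonneg h1 h2
end

section
/- Let q ≥ 2, 0 ≤ ρ < 1 − 1/q, and n large enough. Let C ⊆ {0,...,q−1}^n be a code with |C| ≥ q^{(1−H_q(ρ)+γ)n} for some γ > 0. Then there exists a codeword c ∈ C such that for at least a 1 − q^{−γn+o(n)} fraction of vectors e ∈ {0,...,q−1}^n with wt(e) ≤ ρn, the Hamming ball of radius ρn around c + e (addition mod q coordinatewise) contains at least two codewords of C. -/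
open Finset Filter

/-- The `q`-ary entropy function. -/
noncomputable def qEntropy (q : ℕ) (x : ℝ) : ℝ :=
  x * Real.logb q (q - 1) - x * Real.logb q x - (1 - x) * Real.logb q (1 - x)


lemma mem_support_filter_iff {q n : ℕ} [NeZero q] {s : Finset (Fin n)} {e : Fin n → ZMod q} :
    (univ.filter (fun j => e j ≠ 0) = s) ↔ ∀ j, e j ≠ 0 ↔ j ∈ s := by
  rw [Finset.ext_iff]; simp

lemma card_support_eq (q n : ℕ) [NeZero q] (s : Finset (Fin n)) :
    ((univ : Finset (Fin n → ZMod q)).filter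
      (fun e => univ.filter (fun j => e j ≠ 0) = s)).card
    = (q - 1) ^ s.card := by
  have key : ((univ : Finset (Fin n → ZMod q)).filter
      (fun e => univ.filter (fun j => e j ≠ 0) = s)).card
      = Fintype.card ({j // j ∈ s} → {x : ZMod q // x ≠ 0}) := by
    rw [← Finset.card_univ]
    apply Finset.card_bij' (fun e he => fun j => (⟨e j.1, by
        exact (mem_support_filter_iff.mp (Finset.mem_filter.mp he).2 j.1).mpr j.2⟩ :
        {x : ZMod q // x ≠ 0}))
      (fun g _ => fun j => if h : j ∈ s then (g ⟨j, h⟩ : ZMod q) else 0)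
    case hi => intro e he; exact Finset.mem_univ _
    case hj =>
      intro g _
      simp only [Finset.mem_filter, Finset.mem_univ, true_and]
      rw [mem_support_filter_iff]
      intro j
      by_cases h : j ∈ s
      · simp only [h, dif_pos, iff_true]
        exact (g ⟨j, h⟩).2
      · simp [h]
    case left_inv =>
      intro e he
      simp only [Finset.mem_filter, Finset.mem_univ, true_and] at he
      rw [mem_support_filter_iff] at he
      funext j
      by_cases h : j ∈ s
      · simp [h]
      · simp only [h, dif_neg, not_false_iff]
        exact ((not_not.mp (fun hne => h ((he j).mp hne)))).symm
    case right_inv =>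
      intro g hg
      funext j
      simp [j.2]
  rw [key, Fintype.card_fun, Fintype.card_subtype_compl, ZMod.card, Fintype.card_coe]
  have h1 : Fintype.card {x : ZMod q // x = 0} = 1 := Fintype.card_subtype_eq (0 : ZMod q)
  rw [h1]

lemma card_wt_eq (q n : ℕ) [NeZero q] (i : ℕ) :
    ((univ : Finset (Fin n → ZMod q)).filter
      (fun e => (univ.filter (fun j => e j ≠ 0)).card = i)).card
    = n.choose i * (q - 1) ^ i := by
  rw [Finset.card_eq_sum_card_fiberwise
    (f := fun e => univ.filter (fun j => e j ≠ 0))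
    (t := univ.powersetCard i)
    (fun e he => by
      simp only [Finset.mem_coe, Finset.mem_powersetCard_univ]
      exact (Finset.mem_filter.mp he).2)]
  have : ∀ b ∈ univ.powersetCard i,
      (((univ : Finset (Fin n → ZMod q)).filter
        (fun e => (univ.filter (fun j => e j ≠ 0)).card = i)).filter
        (fun e => univ.filter (fun j => e j ≠ 0) = b)).card = (q - 1) ^ i := by
    intro b hb
    rw [Finset.mem_powersetCard_univ] at hb
    rw [Finset.filter_filter]
    have heq : ((univ : Finset (Fin n → ZMod q)).filter
        (fun e => (univ.filter (fun j => e j ≠ 0)).card = i ∧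
          univ.filter (fun j => e j ≠ 0) = b))
        = (univ : Finset (Fin n → ZMod q)).filter
          (fun e => univ.filter (fun j => e j ≠ 0) = b) := by
      apply Finset.filter_congr
      intro e _
      constructor
      · exact fun h => h.2
      · exact fun h => ⟨by rw [h, hb], h⟩
    rw [heq, card_support_eq, hb]
  rw [Finset.sum_congr rfl this, Finset.sum_const, Finset.card_powersetCard,
    Finset.card_univ, Fintype.card_fin, smul_eq_mul]

lemma sphere_mono (q n k : ℕ) (hq : 2 ≤ q) (hkq : k * q < n * (q - 1)) :
    ∀ i ≤ k, n.choose i * (q - 1) ^ i ≤ n.choose k * (q - 1) ^ k := by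
  set a := q - 1 with ha
  have ha1 : 1 ≤ a := by omega
  have hka : (n - k) * a > k := by
    have hq1 : q = a + 1 := by omega
    have h1 : k * a + k < n * a := by
      have h0 : k * q = k * a + k := by rw [hq1, Nat.mul_add, Nat.mul_one]
      omega
    have h2 : k * a ≤ n * a := by omega
    rw [Nat.sub_mul]; omega
  have step : ∀ i, i < k → n.choose i * a ^ i ≤ n.choose (i + 1) * a ^ (i + 1) := by
    intro i hik
    have key : n.choose (i + 1) * (i + 1) = n.choose i * (n - i) := Nat.choose_succ_right_eq n i
    have hle : i + 1 ≤ (n - i) * a := by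
      calc i + 1 ≤ k + 1 := by omega
        _ ≤ (n - k) * a := hka
        _ ≤ (n - i) * a := Nat.mul_le_mul_right a (by omega)
    have hcalc : n.choose i * a ^ i * (i + 1) ≤ n.choose (i + 1) * a ^ (i + 1) * (i + 1) := by
      calc n.choose i * a ^ i * (i + 1) ≤ n.choose i * a ^ i * ((n - i) * a) :=
            Nat.mul_le_mul_left _ hle
        _ = n.choose i * (n - i) * (a ^ i * a) := by ring
        _ = n.choose (i + 1) * (i + 1) * a ^ (i + 1) := by rw [← key]; ring
        _ = n.choose (i + 1) * a ^ (i + 1) * (i + 1) := by ring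
    exact Nat.le_of_mul_le_mul_right hcalc (by omega)
  intro i hik
  have mono : Monotone (fun i => n.choose (min i k) * a ^ (min i k)) := by
    apply monotone_nat_of_le_succ
    intro m
    by_cases hm : m < k
    · rw [min_eq_left (by omega), min_eq_left (by omega)]
      exact step m hm
    · rw [min_eq_right (by omega), min_eq_right (by omega)]
  have := mono (le_of_lt (Nat.lt_succ_of_le hik) |> fun _ => hik.trans (le_refl k))
  have h2 := mono hik
  simpa [min_eq_left hik, min_self] using h2

lemma vol_lower (q n k : ℕ) [NeZero q] :
    n.choose k * (q - 1) ^ k ≤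
    ((univ : Finset (Fin n → ZMod q)).filter
      (fun e => (univ.filter (fun j => e j ≠ 0)).card ≤ k)).card := by
  rw [← card_wt_eq q n k]
  apply Finset.card_le_card
  intro e he
  simp only [Finset.mem_filter, Finset.mem_univ, true_and] at he ⊢
  omega

lemma vol_upper (q n k : ℕ) [NeZero q] (hq : 2 ≤ q) (hkq : k * q < n * (q - 1)) :
    ((univ : Finset (Fin n → ZMod q)).filter
      (fun e => (univ.filter (fun j => e j ≠ 0)).card ≤ k)).card ≤
    (k + 1) * (n.choose k * (q - 1) ^ k) := by
  rw [Finset.card_eq_sum_card_fiberwise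
    (f := fun e : Fin n → ZMod q => (univ.filter (fun j => e j ≠ 0)).card)
    (t := Finset.range (k + 1))
    (fun e he => by
      simp only [Finset.mem_coe, Finset.mem_range, Nat.lt_succ_iff]
      exact (Finset.mem_filter.mp he).2)]
  calc ∑ i ∈ Finset.range (k + 1),
        (((univ : Finset (Fin n → ZMod q)).filter
          (fun e => (univ.filter (fun j => e j ≠ 0)).card ≤ k)).filter
          (fun e => (univ.filter (fun j => e j ≠ 0)).card = i)).card
      ≤ ∑ i ∈ Finset.range (k + 1), n.choose k * (q - 1) ^ k := by
        apply Finset.sum_le_sum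
        intro i hi
        rw [Finset.mem_range, Nat.lt_succ_iff] at hi
        calc (((univ : Finset (Fin n → ZMod q)).filter
              (fun e => (univ.filter (fun j => e j ≠ 0)).card ≤ k)).filter
              (fun e => (univ.filter (fun j => e j ≠ 0)).card = i)).card
            ≤ ((univ : Finset (Fin n → ZMod q)).filter
              (fun e => (univ.filter (fun j => e j ≠ 0)).card = i)).card := by
              apply Finset.card_le_card
              intro e he
              simp only [Finset.mem_filter, Finset.mem_univ, true_and] at he ⊢
              exact he.2
          _ = n.choose i * (q - 1) ^ i := card_wt_eq q n i
          _ ≤ n.choose k * (q - 1) ^ k := sphere_mono q n k hq hkq i hi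
    _ = (k + 1) * (n.choose k * (q - 1) ^ k) := by
        rw [Finset.sum_const, Finset.card_range, smul_eq_mul]

noncomputable def bt (n k j : ℕ) : ℝ :=
  (n.choose j : ℝ) * ((k : ℝ)/n)^j * (1 - (k : ℝ)/n)^(n - j)

lemma bt_nonneg {n k : ℕ} (hkn : k < n) (j : ℕ) : 0 ≤ bt n k j := by
  unfold bt
  have hn : (0:ℝ) < n := by exact_mod_cast Nat.pos_of_ne_zero (by omega)
  have h1 : 0 ≤ (k : ℝ)/n := by positivity
  have h2 : 0 ≤ 1 - (k : ℝ)/n := by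
    rw [sub_nonneg, div_le_one hn]
    exact_mod_cast hkn.le
  positivity

lemma bt_ratio {n k : ℕ} {j : ℕ} (hj : j < n) :
    bt n k (j+1) * (((j:ℝ)+1) * (1 - (k:ℝ)/n)) = bt n k j * (((n - j : ℕ) : ℝ) * ((k:ℝ)/n)) := by
  unfold bt
  have hc : ((n.choose (j+1) * (j+1) : ℕ) : ℝ) = ((n.choose j * (n - j) : ℕ) : ℝ) := by
    exact_mod_cast congrArg (Nat.cast (R := ℝ)) (Nat.choose_succ_right_eq n j)
  push_cast at hc
  have hpow : (1 - (k:ℝ)/n)^(n - (j+1)) * (1 - (k:ℝ)/n) = (1 - (k:ℝ)/n)^(n - j) := by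
    rw [← pow_succ]
    congr 1
    omega
  have hpow2 : ((k:ℝ)/n)^(j+1) = ((k:ℝ)/n)^j * ((k:ℝ)/n) := pow_succ _ _
  calc (n.choose (j+1) : ℝ) * ((k:ℝ)/n)^(j+1) * (1 - (k:ℝ)/n)^(n-(j+1)) * (((j:ℝ)+1) * (1 - (k:ℝ)/n))
      = ((n.choose (j+1) : ℝ) * ((j:ℝ)+1)) * ((k:ℝ)/n)^(j+1) *
        ((1 - (k:ℝ)/n)^(n-(j+1)) * (1 - (k:ℝ)/n)) := by ring
    _ = ((n.choose j : ℝ) * ((n - j : ℕ) : ℝ)) * (((k:ℝ)/n)^j * ((k:ℝ)/n)) *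
        (1 - (k:ℝ)/n)^(n - j) := by rw [hpow, hpow2]; rw [show ((n.choose (j+1) :ℝ)) * ((j:ℝ)+1) = (n.choose j : ℝ) * ((n-j:ℕ):ℝ) by push_cast; linarith [hc]]
    _ = (n.choose j : ℝ) * ((k:ℝ)/n)^j * (1 - (k:ℝ)/n)^(n-j) * (((n - j : ℕ) : ℝ) * ((k:ℝ)/n)) := by
        ring

lemma bt_le_max {n k : ℕ} (hkn : k < n) : ∀ j, bt n k j ≤ bt n k k := by
  have hn : (0:ℝ) < n := by exact_mod_cast Nat.pos_of_ne_zero (by omega)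
  have hp1 : (k:ℝ)/n < 1 := by rw [div_lt_one hn]; exact_mod_cast hkn
  have hp0 : 0 ≤ (k:ℝ)/n := by positivity
  have hKN : (k:ℝ) ≤ n := by exact_mod_cast hkn.le
  have inc : ∀ j, j < k → bt n k j ≤ bt n k (j+1) := by
    intro j hj
    have hjn : j < n := by omega
    have hr := bt_ratio (k := k) hjn
    have hnj : ((n - j : ℕ) : ℝ) = (n:ℝ) - j := by push_cast [Nat.cast_sub hjn.le]; ring
    have hjk : (j:ℝ) + 1 ≤ k := by exact_mod_cast hj
    have hcmp : ((j:ℝ)+1) * (1 - (k:ℝ)/n) ≤ ((n - j : ℕ) : ℝ) * ((k:ℝ)/n) := by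
      rw [hnj, show ((j:ℝ)+1) * (1 - (k:ℝ)/n) = (((j:ℝ)+1)*((n:ℝ)-k))/n by field_simp,
        show ((n:ℝ)-j) * ((k:ℝ)/n) = (((n:ℝ)-j)*k)/n by ring]
      gcongr ?_ / n
      nlinarith [mul_le_mul_of_nonneg_right hjk hn.le]
    have hc0 : (0:ℝ) < ((j:ℝ)+1) * (1 - (k:ℝ)/n) :=
      mul_pos (by positivity) (by linarith)
    have hmul : bt n k j * (((j:ℝ)+1) * (1 - (k:ℝ)/n)) ≤ bt n k (j+1) * (((j:ℝ)+1) * (1 - (k:ℝ)/n)) := by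
      rw [hr]
      exact mul_le_mul_of_nonneg_left hcmp (bt_nonneg hkn j)
    exact le_of_mul_le_mul_right hmul hc0
  have dec : ∀ j, k ≤ j → bt n k (j+1) ≤ bt n k j := by
    intro j hj
    by_cases hjn : j < n
    · have hr := bt_ratio (k := k) hjn
      have hnj : ((n - j : ℕ) : ℝ) = (n:ℝ) - j := by push_cast [Nat.cast_sub hjn.le]; ring
      have hjk : (k:ℝ) ≤ j := by exact_mod_cast hj
      have hcmp : ((n - j : ℕ) : ℝ) * ((k:ℝ)/n) ≤ ((j:ℝ)+1) * (1 - (k:ℝ)/n) := by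
        rw [hnj, show ((j:ℝ)+1) * (1 - (k:ℝ)/n) = (((j:ℝ)+1)*((n:ℝ)-k))/n by field_simp,
          show ((n:ℝ)-j) * ((k:ℝ)/n) = (((n:ℝ)-j)*k)/n by ring]
        gcongr ?_ / n
        nlinarith [mul_le_mul_of_nonneg_right hjk hn.le]
      have hc0 : (0:ℝ) < ((j:ℝ)+1) * (1 - (k:ℝ)/n) :=
        mul_pos (by positivity) (by linarith)
      have hmul : bt n k (j+1) * (((j:ℝ)+1) * (1 - (k:ℝ)/n)) ≤ bt n k j * (((j:ℝ)+1) * (1 - (k:ℝ)/n)) := by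
        rw [hr]
        exact mul_le_mul_of_nonneg_left hcmp (bt_nonneg hkn j)
      exact le_of_mul_le_mul_right hmul hc0
    · have : bt n k (j+1) = 0 := by
        unfold bt
        rw [Nat.choose_eq_zero_of_lt (by omega)]
        simp
      rw [this]
      exact bt_nonneg hkn j
  intro j
  rcases le_or_gt j k with h | h
  · have mono : Monotone (fun m => bt n k (min m k)) := by
      apply monotone_nat_of_le_succ
      intro m
      by_cases hm : m < k
      · rw [min_eq_left (by omega), min_eq_left (by omega)]
        exact inc m hm
      · rw [min_eq_right (by omega), min_eq_right (by omega)]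
    have := mono h
    simpa [min_eq_left h, min_self] using this
  · have anti : Antitone (fun m => bt n k (max m k)) := by
      apply antitone_nat_of_succ_le
      intro m
      by_cases hm : k ≤ m
      · rw [max_eq_left (by omega), max_eq_left (by omega)]
        exact dec m hm
      · rw [max_eq_right (by omega), max_eq_right (by omega)]
    have := anti h.le
    simpa [max_eq_left h.le, max_self] using this

lemma bt_sum_eq_one {n k : ℕ} (hkn : k < n) :
    ∑ j ∈ Finset.range (n+1), bt n k j = 1 := by
  have hn : (0:ℝ) < n := by exact_mod_cast Nat.pos_of_ne_zero (by omega)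
  have h := add_pow ((k:ℝ)/n) (1 - (k:ℝ)/n) n
  have h1 : ((k:ℝ)/n + (1 - (k:ℝ)/n)) = 1 := by ring
  rw [h1, one_pow] at h
  rw [h]
  apply Finset.sum_congr rfl
  intro j _
  unfold bt
  ring

lemma bt_k_le_one {n k : ℕ} (hkn : k < n) : bt n k k ≤ 1 := by
  rw [← bt_sum_eq_one hkn]
  exact Finset.single_le_sum (fun j _ => bt_nonneg hkn j)
    (Finset.mem_range.mpr (by omega))

lemma one_le_bt_k {n k : ℕ} (hkn : k < n) :
    (1:ℝ) / (n + 1) ≤ bt n k k := by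
  have h1 : (1:ℝ) = ∑ j ∈ Finset.range (n+1), bt n k j := (bt_sum_eq_one hkn).symm
  have h2 : ∑ j ∈ Finset.range (n+1), bt n k j ≤ (n+1 : ℝ) * bt n k k := by
    calc ∑ j ∈ Finset.range (n+1), bt n k j ≤ ∑ _j ∈ Finset.range (n+1), bt n k k :=
        Finset.sum_le_sum (fun j _ => bt_le_max hkn j)
      _ = (n+1 : ℝ) * bt n k k := by
        rw [Finset.sum_const, Finset.card_range, nsmul_eq_mul]; push_cast; ring
  rw [div_le_iff₀ (by positivity)]
  nlinarith [bt_nonneg hkn k]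

lemma rpow_nH_eq (q n k : ℕ) (hq : 2 ≤ q) (hkn : k < n) (hk : 0 < k) :
    (q:ℝ) ^ ((n:ℝ) * qEntropy q ((k:ℝ)/n)) =
      ((q:ℝ) - 1)^k / (((k:ℝ)/n)^k * (1 - (k:ℝ)/n)^(n-k)) := by
  have hn : (0:ℝ) < n := by exact_mod_cast Nat.pos_of_ne_zero (by omega)
  have hq0 : (0:ℝ) < q := by positivity
  have hq1 : (q:ℝ) ≠ 1 := by exact_mod_cast (by omega : q ≠ 1)
  have hp0 : (0:ℝ) < (k:ℝ)/n := by positivity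
  have hp1 : (k:ℝ)/n < 1 := by rw [div_lt_one hn]; exact_mod_cast hkn
  have h1p : (0:ℝ) < 1 - (k:ℝ)/n := by linarith
  have hqm1 : (0:ℝ) < (q:ℝ) - 1 := by
    have : (2:ℝ) ≤ q := by exact_mod_cast hq
    linarith
  set p := (k:ℝ)/n with hp
  have hnp : (n:ℝ) * p = k := by rw [hp]; field_simp
  have hn1p : (n:ℝ) * (1 - p) = (n:ℝ) - k := by rw [mul_sub, hnp]; ring
  have hexp : (n:ℝ) * qEntropy q p =
      (k:ℝ) * Real.logb q ((q:ℝ)-1) - (k:ℝ) * Real.logb q p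
        - ((n:ℝ) - k) * Real.logb q (1 - p) := by
    unfold qEntropy
    rw [mul_sub, mul_sub, ← mul_assoc, ← mul_assoc, ← mul_assoc, hnp, hn1p]
  have key : ∀ (x : ℝ), 0 < x → ∀ m : ℕ,
      (q:ℝ) ^ ((m:ℝ) * Real.logb q x) = x ^ m := by
    intro x hx m
    rw [mul_comm, Real.rpow_mul hq0.le, Real.rpow_logb hq0 hq1 hx, Real.rpow_natCast]
  rw [hexp, sub_sub, Real.rpow_sub hq0, Real.rpow_add hq0, key _ hqm1 k, key _ hp0 k]
  rw [show ((n:ℝ) - k) = ((n - k : ℕ) : ℝ) from (Nat.cast_sub hkn.le).symm]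
  rw [key _ h1p (n - k)]

lemma choose_mul_le_rpow (q n k : ℕ) (hq : 2 ≤ q) (hkn : k < n) (hk : 0 < k) :
    (n.choose k : ℝ) * ((q:ℝ) - 1)^k ≤ (q:ℝ) ^ ((n:ℝ) * qEntropy q ((k:ℝ)/n)) := by
  have hn : (0:ℝ) < n := by exact_mod_cast Nat.pos_of_ne_zero (by omega)
  have hp0 : (0:ℝ) < (k:ℝ)/n := by positivity
  have hp1 : (k:ℝ)/n < 1 := by rw [div_lt_one hn]; exact_mod_cast hkn
  have h1p : (0:ℝ) < 1 - (k:ℝ)/n := by linarith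
  have hqm1 : (0:ℝ) ≤ (q:ℝ) - 1 := by
    have : (2:ℝ) ≤ q := by exact_mod_cast hq
    linarith
  have hP : (0:ℝ) < ((k:ℝ)/n)^k * (1 - (k:ℝ)/n)^(n-k) := by positivity
  rw [rpow_nH_eq q n k hq hkn hk, le_div_iff₀ hP]
  have hbt := bt_k_le_one hkn
  unfold bt at hbt
  calc (n.choose k : ℝ) * ((q:ℝ)-1)^k * (((k:ℝ)/n)^k * (1 - (k:ℝ)/n)^(n-k))
      = ((n.choose k : ℝ) * ((k:ℝ)/n)^k * (1 - (k:ℝ)/n)^(n-k)) * ((q:ℝ)-1)^k := by ring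
    _ ≤ 1 * ((q:ℝ)-1)^k := by
        apply mul_le_mul_of_nonneg_right hbt (by positivity)
    _ = ((q:ℝ)-1)^k := by ring

lemma rpow_le_succ_mul_choose (q n k : ℕ) (hq : 2 ≤ q) (hkn : k < n) (hk : 0 < k) :
    (q:ℝ) ^ ((n:ℝ) * qEntropy q ((k:ℝ)/n)) ≤ ((n:ℝ)+1) * ((n.choose k : ℝ) * ((q:ℝ) - 1)^k) := by
  have hn : (0:ℝ) < n := by exact_mod_cast Nat.pos_of_ne_zero (by omega)
  have hp0 : (0:ℝ) < (k:ℝ)/n := by positivity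
  have hp1 : (k:ℝ)/n < 1 := by rw [div_lt_one hn]; exact_mod_cast hkn
  have h1p : (0:ℝ) < 1 - (k:ℝ)/n := by linarith
  have hqm1 : (0:ℝ) ≤ (q:ℝ) - 1 := by
    have : (2:ℝ) ≤ q := by exact_mod_cast hq
    linarith
  have hP : (0:ℝ) < ((k:ℝ)/n)^k * (1 - (k:ℝ)/n)^(n-k) := by positivity
  rw [rpow_nH_eq q n k hq hkn hk, div_le_iff₀ hP]
  have hbt := one_le_bt_k hkn
  unfold bt at hbt
  rw [div_le_iff₀ (by positivity : (0:ℝ) < (n:ℝ)+1)] at hbt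
  calc ((q:ℝ)-1)^k = 1 * ((q:ℝ)-1)^k := by ring
    _ ≤ ((n.choose k : ℝ) * ((k:ℝ)/n)^k * (1 - (k:ℝ)/n)^(n-k) * ((n:ℝ)+1)) * ((q:ℝ)-1)^k := by
        apply mul_le_mul_of_nonneg_right hbt (by positivity)
    _ = ((n:ℝ)+1) * ((n.choose k : ℝ) * ((q:ℝ)-1)^k) * (((k:ℝ)/n)^k * (1 - (k:ℝ)/n)^(n-k)) := by
        ring

variable {q n : ℕ} [NeZero q]

lemma counting (ρ : ℝ) (C : Finset (Fin n → ZMod q)) (hC : C.Nonempty) :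
    ∃ c ∈ C,
      ((univ.filter (fun e : Fin n → ZMod q =>
          ((univ.filter (fun i => e i ≠ 0)).card : ℝ) ≤ ρ * n)).card : ℝ)
        - ((univ.filter (fun e : Fin n → ZMod q =>
            ((univ.filter (fun i => e i ≠ 0)).card : ℝ) ≤ ρ * n ∧
            ∃ c₁ ∈ C, ∃ c₂ ∈ C, c₁ ≠ c₂ ∧
              (hammingDist c₁ (c + e) : ℝ) ≤ ρ * n ∧
              (hammingDist c₂ (c + e) : ℝ) ≤ ρ * n)).card : ℝ)
      ≤ (q:ℝ)^n / C.card := by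
  classical
  set V : Finset (Fin n → ZMod q) :=
    univ.filter (fun e => ((univ.filter (fun i => e i ≠ 0)).card : ℝ) ≤ ρ * n) with hV
  set G : (Fin n → ZMod q) → Finset (Fin n → ZMod q) := fun c =>
    univ.filter (fun e =>
      ((univ.filter (fun i => e i ≠ 0)).card : ℝ) ≤ ρ * n ∧
      ∃ c₁ ∈ C, ∃ c₂ ∈ C, c₁ ≠ c₂ ∧
        (hammingDist c₁ (c + e) : ℝ) ≤ ρ * n ∧
        (hammingDist c₂ (c + e) : ℝ) ≤ ρ * n) with hG
  have hGV : ∀ c, G c ⊆ V := by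
    intro c e he
    simp only [hG, Finset.mem_filter, Finset.mem_univ, true_and] at he
    simp only [hV, Finset.mem_filter, Finset.mem_univ, true_and]
    exact he.1
  -- distance from c to c+e is the weight of e
  have hdist : ∀ (c e : Fin n → ZMod q),
      hammingDist c (c + e) = (univ.filter (fun i => e i ≠ 0)).card := by
    intro c e
    rw [hammingDist_comm, hammingDist_eq_hammingNorm]
    simp [hammingNorm]
  -- pairwise disjoint images of the "bad" sets
  have hdisj : (C : Set (Fin n → ZMod q)).PairwiseDisjoint
      (fun c => (V \ G c).image (fun e => c + e)) := by
    intro c hc c' hc' hne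
    simp only [Finset.disjoint_left]
    intro y hy hy'
    simp only [Finset.mem_image] at hy hy'
    obtain ⟨e, he, hye⟩ := hy
    obtain ⟨e', he', hye'⟩ := hy'
    rw [Finset.mem_sdiff] at he he'
    have heV := he.1
    simp only [hV, Finset.mem_filter, Finset.mem_univ, true_and] at heV
    have he'V := he'.1
    simp only [hV, Finset.mem_filter, Finset.mem_univ, true_and] at he'V
    have hbad := he.2
    simp only [hG, Finset.mem_filter, Finset.mem_univ, true_and, not_and, not_exists] at hbad
    exact hbad heV c (by exact_mod_cast hc) c' (by exact_mod_cast hc') hne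
      (by rw [hdist]; exact heV)
      (by rw [hye, ← hye', hdist]; exact he'V)
  have hcard_im : ∀ c, ((V \ G c).image (fun e => c + e)).card = (V \ G c).card :=
    fun c => Finset.card_image_of_injective _ (add_right_injective c)
  have h1 : (C.biUnion fun c => (V \ G c).image (fun e => c + e)).card
      = ∑ c ∈ C, (V \ G c).card := by
    rw [Finset.card_biUnion (fun x hx y hy hxy => hdisj hx hy hxy)]
    exact Finset.sum_congr rfl (fun c _ => hcard_im c)
  have h2 : ∑ c ∈ C, (V \ G c).card ≤ q ^ n := by
    rw [← h1]
    calc (C.biUnion fun c => (V \ G c).image (fun e => c + e)).card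
        ≤ Fintype.card (Fin n → ZMod q) := Finset.card_le_univ _
      _ = q ^ n := by rw [Fintype.card_fun, ZMod.card, Fintype.card_fin]
  have h3 : ∑ c ∈ C, ((V \ G c).card : ℝ) ≤ (q:ℝ)^n := by
    have := (Nat.cast_le (α := ℝ)).mpr h2
    push_cast at this
    exact this
  have hCpos : (0:ℝ) < C.card := by exact_mod_cast Finset.card_pos.mpr hC
  have h4 : ∑ c ∈ C, ((V \ G c).card : ℝ) ≤ ∑ _c ∈ C, (q:ℝ)^n / C.card := by
    rw [Finset.sum_const, nsmul_eq_mul, mul_div_cancel₀]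
    · exact h3
    · exact ne_of_gt hCpos
  obtain ⟨c, hc, hle⟩ := Finset.exists_le_of_sum_le hC h4
  refine ⟨c, hc, ?_⟩
  have hsub : ((V \ G c).card : ℝ) = (V.card : ℝ) - ((G c).card : ℝ) := by
    rw [Finset.card_sdiff_of_subset (hGV c)]
    push_cast [Nat.cast_sub (Finset.card_le_card (hGV c))]
    ring
  rw [← hsub]
  exact hle

noncomputable def volCard (q n : ℕ) [NeZero q] (ρ : ℝ) : ℕ :=
  ((univ : Finset (Fin n → ZMod q)).filter
    (fun e => ((univ.filter (fun i => e i ≠ 0)).card : ℝ) ≤ ρ * n)).card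

noncomputable def fAux (q : ℕ) [NeZero q] (ρ : ℝ) (n : ℕ) : ℝ :=
  if n = 0 then 0 else qEntropy q ρ * n - Real.logb q (volCard q n ρ)

lemma volCard_eq_nat (q n : ℕ) [NeZero q] {ρ : ℝ} (hρ0 : 0 ≤ ρ) :
    volCard q n ρ = ((univ : Finset (Fin n → ZMod q)).filter
      (fun e => (univ.filter (fun i => e i ≠ 0)).card ≤ ⌊ρ * n⌋₊)).card := by
  unfold volCard
  congr 1
  apply Finset.filter_congr
  intro e _
  rw [Nat.le_floor_iff (by positivity)]

lemma volCard_pos (q n : ℕ) [NeZero q] {ρ : ℝ} (hρ0 : 0 ≤ ρ) :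
    0 < volCard q n ρ := by
  apply Finset.card_pos.mpr
  refine ⟨0, ?_⟩
  simp only [Finset.mem_filter, Finset.mem_univ, true_and]
  have : (univ.filter (fun i : Fin n => (0 : Fin n → ZMod q) i ≠ 0)) = ∅ := by
    apply Finset.filter_false_of_mem
    intro i _
    simp
  rw [this]
  simp
  positivity

lemma qEntropy_zero (q : ℕ) : qEntropy q 0 = 0 := by
  unfold qEntropy
  simp


lemma floor_mul_lt (q n : ℕ) (hq : 2 ≤ q) {ρ : ℝ} (hρ0 : 0 ≤ ρ) (hρ : ρ < 1 - 1/q)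
    (hn : 1 ≤ n) : ⌊ρ * n⌋₊ * q < n * (q - 1) := by
  have hq0 : (0:ℝ) < q := by positivity
  have hn0 : (0:ℝ) < n := by exact_mod_cast hn
  have h1 : ((⌊ρ * n⌋₊ * q : ℕ) : ℝ) < ((n * (q-1) : ℕ) : ℝ) := by
    push_cast [Nat.cast_sub (by omega : 1 ≤ q)]
    calc (⌊ρ * n⌋₊ : ℝ) * q ≤ (ρ * n) * q :=
          mul_le_mul_of_nonneg_right (Nat.floor_le (by positivity)) hq0.le
      _ < ((1 - 1/q) * n) * q := by
          apply mul_lt_mul_of_pos_right (mul_lt_mul_of_pos_right hρ hn0) hq0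
      _ = (n:ℝ) * ((q:ℝ) - 1) := by field_simp
  exact_mod_cast h1

lemma vol_rpow_bounds (q n : ℕ) [NeZero q] (hq : 2 ≤ q) {ρ : ℝ} (hρ0 : 0 ≤ ρ)
    (hρ : ρ < 1 - 1/q) (hn : 1 ≤ n) :
    (q:ℝ) ^ ((n:ℝ) * qEntropy q ((⌊ρ*n⌋₊:ℝ)/n)) / ((n:ℝ)+1) ≤ (volCard q n ρ : ℝ) ∧
    (volCard q n ρ : ℝ) ≤ ((n:ℝ)+1) * (q:ℝ) ^ ((n:ℝ) * qEntropy q ((⌊ρ*n⌋₊:ℝ)/n)) := by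
  have h1q : 1 ≤ q := by omega
  set k := ⌊ρ*n⌋₊ with hk
  have hkq : k * q < n * (q - 1) := floor_mul_lt q n hq hρ0 hρ hn
  have hkn : k < n := by
    have h1 : k * q < n * q := lt_of_lt_of_le hkq (Nat.mul_le_mul_left n (by omega))
    exact lt_of_mul_lt_mul_right h1 (Nat.zero_le q)
  have hn1 : (0:ℝ) < (n:ℝ) + 1 := by positivity
  rw [volCard_eq_nat q n hρ0, ← hk]
  have hupper := vol_upper q n k hq hkq
  have hlower := vol_lower q n k
  rcases Nat.eq_zero_or_pos k with hk0 | hkpos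
  · have hV1 : ((univ : Finset (Fin n → ZMod q)).filter
        (fun e => (univ.filter (fun i => e i ≠ 0)).card ≤ k)).card = 1 := by
      apply le_antisymm
      · simpa [hk0] using hupper
      · simpa [hk0] using hlower
    rw [hV1, hk0]
    have : ((0:ℕ):ℝ)/(n:ℝ) = 0 := by simp
    rw [this, qEntropy_zero, mul_zero, Real.rpow_zero]
    constructor
    · push_cast
      rw [div_le_one hn1]; linarith
    · push_cast; nlinarith
  · have hcast : (((n.choose k) * (q-1)^k : ℕ) : ℝ)
        = (n.choose k : ℝ) * ((q:ℝ) - 1)^k := by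
      rw [Nat.cast_mul, Nat.cast_pow, Nat.cast_sub h1q, Nat.cast_one]
    have hlow : (q:ℝ) ^ ((n:ℝ) * qEntropy q ((k:ℝ)/n)) / ((n:ℝ)+1)
        ≤ (n.choose k : ℝ) * ((q:ℝ) - 1)^k := by
      rw [div_le_iff₀ hn1]
      calc (q:ℝ) ^ ((n:ℝ) * qEntropy q ((k:ℝ)/n))
          ≤ ((n:ℝ)+1) * ((n.choose k : ℝ) * ((q:ℝ) - 1)^k) :=
            rpow_le_succ_mul_choose q n k hq hkn hkpos
        _ = (n.choose k : ℝ) * ((q:ℝ) - 1)^k * ((n:ℝ)+1) := by ring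
    constructor
    · calc (q:ℝ) ^ ((n:ℝ) * qEntropy q ((k:ℝ)/n)) / ((n:ℝ)+1)
          ≤ (n.choose k : ℝ) * ((q:ℝ) - 1)^k := hlow
        _ ≤ _ := by rw [← hcast]; exact_mod_cast hlower
    · calc (((univ : Finset (Fin n → ZMod q)).filter
            (fun e => (univ.filter (fun i => e i ≠ 0)).card ≤ k)).card : ℝ)
          ≤ ((k:ℝ)+1) * ((n.choose k : ℝ) * ((q:ℝ) - 1)^k) := by
            rw [← hcast]
            exact_mod_cast hupper
        _ ≤ ((n:ℝ)+1) * ((n.choose k : ℝ) * ((q:ℝ) - 1)^k) := by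
            apply mul_le_mul_of_nonneg_right ?_ (by rw [← hcast]; positivity)
            have : (k:ℝ) ≤ n := by exact_mod_cast hkn.le
            linarith
        _ ≤ ((n:ℝ)+1) * (q:ℝ) ^ ((n:ℝ) * qEntropy q ((k:ℝ)/n)) := by
            apply mul_le_mul_of_nonneg_left (choose_mul_le_rpow q n k hq hkn hkpos) hn1.le


lemma fAux_abs_bound (q n : ℕ) [NeZero q] (hq : 2 ≤ q) {ρ : ℝ} (hρ0 : 0 ≤ ρ)
    (hρ : ρ < 1 - 1/q) (hn : 1 ≤ n) :
    |fAux q ρ n| ≤ (n:ℝ) * |qEntropy q ρ - qEntropy q ((⌊ρ*n⌋₊:ℝ)/n)|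
      + Real.logb q ((n:ℝ)+1) := by
  have hq1 : (1:ℝ) < q := by exact_mod_cast (by omega : 1 < q)
  have hq0 : (0:ℝ) < q := by positivity
  have hqne : (q:ℝ) ≠ 1 := ne_of_gt hq1
  have hn1 : (0:ℝ) < (n:ℝ)+1 := by positivity
  obtain ⟨hlo, hhi⟩ := vol_rpow_bounds q n hq hρ0 hρ hn
  have hVpos : (0:ℝ) < (volCard q n ρ : ℝ) := by exact_mod_cast volCard_pos q n hρ0
  set E := (n:ℝ) * qEntropy q ((⌊ρ*n⌋₊:ℝ)/n) with hE
  have hrpos : (0:ℝ) < (q:ℝ) ^ E := Real.rpow_pos_of_pos hq0 E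
  -- logb bounds
  have hlog1 : E - Real.logb q ((n:ℝ)+1) ≤ Real.logb q (volCard q n ρ) := by
    have h := Real.logb_le_logb_of_le hq1 (by positivity : (0:ℝ) < (q:ℝ)^E / ((n:ℝ)+1)) hlo
    rwa [Real.logb_div (ne_of_gt hrpos) (ne_of_gt hn1), Real.logb_rpow hq0 hqne] at h
  have hlog2 : Real.logb q (volCard q n ρ) ≤ E + Real.logb q ((n:ℝ)+1) := by
    have h := Real.logb_le_logb_of_le hq1 hVpos hhi
    rwa [Real.logb_mul (ne_of_gt hn1) (ne_of_gt hrpos), Real.logb_rpow hq0 hqne,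
      add_comm] at h
  have hfn : fAux q ρ n = qEntropy q ρ * n - Real.logb q (volCard q n ρ) := by
    unfold fAux
    rw [if_neg (by omega)]
  rw [hfn]
  have habs : |qEntropy q ρ * n - Real.logb q (volCard q n ρ)|
      ≤ |qEntropy q ρ * n - E| + |E - Real.logb q (volCard q n ρ)| := by
    have := abs_sub_le (qEntropy q ρ * n) E (Real.logb q (volCard q n ρ))
    exact this
  calc |qEntropy q ρ * n - Real.logb q (volCard q n ρ)|
      ≤ |qEntropy q ρ * n - E| + |E - Real.logb q (volCard q n ρ)| := habs
    _ ≤ (n:ℝ) * |qEntropy q ρ - qEntropy q ((⌊ρ*n⌋₊:ℝ)/n)| + Real.logb q ((n:ℝ)+1) := by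
        apply add_le_add
        · have heq : qEntropy q ρ * n - E
              = (n:ℝ) * (qEntropy q ρ - qEntropy q ((⌊ρ*n⌋₊:ℝ)/n)) := by
            rw [hE]; ring
          rw [heq, abs_mul, abs_of_nonneg (by positivity : (0:ℝ) ≤ (n:ℝ))]
        · rw [abs_sub_le_iff]
          constructor
          · linarith
          · linarith


lemma continuous_qEntropy (q : ℕ) : Continuous (qEntropy q) := by
  have c2 : Continuous (fun x : ℝ => x * Real.logb q x) := by
    have h : (fun x : ℝ => x * Real.logb q x) = fun x => (x * Real.log x) / Real.log q := by
      funext x; rw [Real.logb]; ring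
    rw [h]
    exact Real.continuous_mul_log.div_const _
  have c3 : Continuous (fun x : ℝ => (1-x) * Real.logb q (1-x)) :=
    c2.comp (continuous_const.sub continuous_id)
  unfold qEntropy
  exact ((continuous_id.mul continuous_const).sub c2).sub c3

lemma tendsto_floor_div (ρ : ℝ) (hρ0 : 0 ≤ ρ) :
    Filter.Tendsto (fun n : ℕ => ((⌊ρ * n⌋₊ : ℝ))/n) atTop (nhds ρ) := by
  apply tendsto_of_tendsto_of_tendsto_of_le_of_le'
    (g := fun n : ℕ => ρ - 1/(n:ℝ)) (h := fun _ : ℕ => ρ)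
  · have : Filter.Tendsto (fun n : ℕ => ρ - 1/(n:ℝ)) atTop (nhds (ρ - 0)) :=
      tendsto_const_nhds.sub tendsto_one_div_atTop_nhds_zero_nat
    simpa using this
  · exact tendsto_const_nhds
  · filter_upwards [eventually_ge_atTop 1] with n hn
    have hn0 : (0:ℝ) < n := by exact_mod_cast hn
    have h1 : ρ * n - 1 < (⌊ρ * n⌋₊ : ℝ) := Nat.sub_one_lt_floor (ρ * n)
    rw [show ρ - 1/(n:ℝ) = (ρ * n - 1)/n by field_simp]
    gcongr
  · filter_upwards [eventually_ge_atTop 1] with n hn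
    have hn0 : (0:ℝ) < n := by exact_mod_cast hn
    rw [div_le_iff₀ hn0]
    exact Nat.floor_le (by positivity)

lemma fAux_isLittleO (q : ℕ) [NeZero q] (hq : 2 ≤ q) {ρ : ℝ} (hρ0 : 0 ≤ ρ)
    (hρ : ρ < 1 - 1/q) :
    (fun n => fAux q ρ n) =o[atTop] (fun n : ℕ => (n:ℝ)) := by
  have hq1 : (1:ℝ) < q := by exact_mod_cast (by omega : 1 < q)
  have hlogq : (0:ℝ) < Real.log q := Real.log_pos hq1
  have hΔ : Filter.Tendsto
      (fun n : ℕ => |qEntropy q ρ - qEntropy q ((⌊ρ*n⌋₊:ℝ)/n)|) atTop (nhds 0) := by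
    have h1 := ((continuous_qEntropy q).tendsto ρ).comp (tendsto_floor_div ρ hρ0)
    have h2 : Filter.Tendsto
        (fun n : ℕ => qEntropy q ρ - qEntropy q ((⌊ρ*n⌋₊:ℝ)/n)) atTop (nhds 0) := by
      have := tendsto_const_nhds (x := qEntropy q ρ) (f := atTop (α := ℕ)) |>.sub h1
      simpa using this
    have := h2.abs
    simpa using this
  have hlogo : (fun n : ℕ => Real.log ((n:ℝ)+1)) =o[atTop] (fun n : ℕ => (n:ℝ)) := by
    have hcomp : Filter.Tendsto (fun n : ℕ => (n:ℝ)+1) atTop atTop :=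
      tendsto_atTop_add_const_right _ 1 tendsto_natCast_atTop_atTop
    have h1 := Real.isLittleO_log_id_atTop.comp_tendsto hcomp
    have h2 : (fun n : ℕ => (n:ℝ)+1) =O[atTop] (fun n : ℕ => (n:ℝ)) := by
      rw [Asymptotics.isBigO_iff]
      refine ⟨2, ?_⟩
      filter_upwards [eventually_ge_atTop 1] with n hn
      have hn0 : (1:ℝ) ≤ n := by exact_mod_cast hn
      rw [Real.norm_eq_abs, Real.norm_eq_abs, abs_of_nonneg (by linarith),
        abs_of_nonneg (by linarith)]
      linarith
    exact h1.trans_isBigO h2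
  rw [Asymptotics.isLittleO_iff]
  intro c hc
  have ev1 := hΔ.eventually_lt_const (show (0:ℝ) < c/2 by linarith)
  have ev2 := Asymptotics.isLittleO_iff.mp hlogo (show (0:ℝ) < c/2 * Real.log q by positivity)
  filter_upwards [ev1, ev2, eventually_ge_atTop 1] with n h1 h2 hn
  have hn0 : (1:ℝ) ≤ n := by exact_mod_cast hn
  have hb := fAux_abs_bound q n hq hρ0 hρ hn
  rw [Real.norm_eq_abs, Real.norm_eq_abs, abs_of_nonneg (by linarith : (0:ℝ) ≤ (n:ℝ))]
  have hlogb : Real.logb q ((n:ℝ)+1) ≤ c/2 * (n:ℝ) := by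
    rw [Real.logb, div_le_iff₀ hlogq]
    have : Real.log ((n:ℝ)+1) ≤ c/2 * Real.log q * (n:ℝ) := by
      have := h2
      rw [Real.norm_eq_abs, Real.norm_eq_abs, abs_of_nonneg
        (Real.log_nonneg (by linarith)), abs_of_nonneg (by linarith : (0:ℝ) ≤ (n:ℝ))] at this
      exact this
    linarith
  calc |fAux q ρ n| ≤ (n:ℝ) * |qEntropy q ρ - qEntropy q ((⌊ρ*n⌋₊:ℝ)/n)|
        + Real.logb q ((n:ℝ)+1) := hb
    _ ≤ (n:ℝ) * (c/2) + c/2 * (n:ℝ) := by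
        apply add_le_add ?_ hlogb
        exact mul_le_mul_of_nonneg_left h1.le (by linarith)
    _ = c * (n:ℝ) := by ring

/-- for any code `C ⊆ {0,…,q−1}^n` of rate `1 − H_q(ρ) + γ` (`n` large
enough), there is a codeword `c ∈ C` such that for at least a `1 − q^{−γn+o(n)}`
fraction of error patterns `e` of weight at most `ρn`, the Hamming ball of radius `ρn`
around `c + e` contains at least two codewords of `C`. -/
theorem stmt_9 (q : ℕ) [NeZero q] (hq : 2 ≤ q) (ρ γ : ℝ)
    (hρ0 : 0 ≤ ρ) (hρ : ρ < 1 - 1 / q) (hγ : 0 < γ) :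
    ∃ f : ℕ → ℝ, f =o[atTop] (fun n => (n : ℝ)) ∧ ∃ N₀ : ℕ, ∀ n ≥ N₀,
      ∀ C : Finset (Fin n → ZMod q),
        (q : ℝ) ^ ((1 - qEntropy q ρ + γ) * n) ≤ (C.card : ℝ) →
        ∃ c ∈ C,
          (1 - (q : ℝ) ^ (-γ * n + f n)) *
            ((Finset.univ.filter (fun e : Fin n → ZMod q =>
              ((Finset.univ.filter (fun i => e i ≠ 0)).card : ℝ) ≤ ρ * n)).card : ℝ)
          ≤ ((Finset.univ.filter (fun e : Fin n → ZMod q =>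
              ((Finset.univ.filter (fun i => e i ≠ 0)).card : ℝ) ≤ ρ * n ∧
              ∃ c₁ ∈ C, ∃ c₂ ∈ C, c₁ ≠ c₂ ∧
                (hammingDist c₁ (c + e) : ℝ) ≤ ρ * n ∧
                (hammingDist c₂ (c + e) : ℝ) ≤ ρ * n)).card : ℝ) := by
  refine ⟨fAux q ρ, fAux_isLittleO q hq hρ0 hρ, 1, ?_⟩
  intro n hn C hC
  have hq1 : (1:ℝ) < q := by exact_mod_cast (by omega : 1 < q)
  have hq0 : (0:ℝ) < q := by positivity
  have hqne : (q:ℝ) ≠ 1 := ne_of_gt hq1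
  have hCpos : (0:ℝ) < C.card := lt_of_lt_of_le (Real.rpow_pos_of_pos hq0 _) hC
  have hCne : C.Nonempty := Finset.card_pos.mp (by exact_mod_cast hCpos)
  obtain ⟨c, hc, hle⟩ := counting ρ C hCne
  refine ⟨c, hc, ?_⟩
  have hVol : ((Finset.univ.filter (fun e : Fin n → ZMod q =>
      ((Finset.univ.filter (fun i => e i ≠ 0)).card : ℝ) ≤ ρ * n)).card : ℝ)
      = (volCard q n ρ : ℝ) := rfl
  have hVpos : (0:ℝ) < (volCard q n ρ : ℝ) := by exact_mod_cast volCard_pos q n hρ0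
  have hf : fAux q ρ n = qEntropy q ρ * n - Real.logb q (volCard q n ρ) := by
    unfold fAux
    rw [if_neg (by omega)]
  have key1 : (q:ℝ)^(-γ*(n:ℝ) + fAux q ρ n) * (volCard q n ρ : ℝ)
      = (q:ℝ)^((qEntropy q ρ - γ)*(n:ℝ)) := by
    nth_rewrite 1 [← Real.rpow_logb hq0 hqne hVpos]
    rw [← Real.rpow_add hq0, hf]
    congr 1
    ring
  have key2 : (q:ℝ)^(n:ℕ) / C.card ≤ (q:ℝ)^((qEntropy q ρ - γ)*(n:ℝ)) := by
    calc (q:ℝ)^(n:ℕ) / C.card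
        ≤ (q:ℝ)^(n:ℕ) / (q:ℝ)^((1 - qEntropy q ρ + γ) * n) := by
          apply div_le_div_of_nonneg_left (by positivity) (Real.rpow_pos_of_pos hq0 _) hC
      _ = (q:ℝ)^((qEntropy q ρ - γ)*(n:ℝ)) := by
          rw [← Real.rpow_natCast (q:ℝ) n, ← Real.rpow_sub hq0]
          congr 1
          ring
  rw [hVol] at hle ⊢
  nlinarith [hle.trans (key2.trans_eq key1.symm)]
end

section
/- Let k ≤ n < q with q > (n/k)^2, and let C be the Reed-Solomon code of dimension k and block length n over F_q. Then for every codeword c, for at least a 1 − q^{−Ω(k)} fraction of error patterns e of Hamming weight at most n − 4k, the only codeword of C agreeing with c + e in at least 4k positions is c itself. -/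
set_option maxHeartbeats 1600000

open Polynomial Finset
open scoped Classical Nat

lemma aux_pow_le_three_pow_mul_factorial (j : ℕ) : (j : ℝ) ^ j ≤ 3 ^ j * (j ! : ℝ) := by
  induction j with
  | zero => simp
  | succ j ih =>
    have hj3 : ((j:ℝ) + 1) ^ j ≤ 3 * (j:ℝ) ^ j := by
      rcases Nat.eq_zero_or_pos j with h | h
      · subst h; norm_num
      · have hjpos : (0:ℝ) < j := by exact_mod_cast h
        have h1 : (j:ℝ) + 1 = (j:ℝ) * (1 + 1/(j:ℝ)) := by field_simp
        have h2 : (1 + 1/(j:ℝ)) ≤ Real.exp (1/(j:ℝ)) := by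
          have := Real.add_one_le_exp (1/(j:ℝ)); linarith
        have h3 : (1 + 1/(j:ℝ)) ^ j ≤ Real.exp (1/(j:ℝ)) ^ j :=
          pow_le_pow_left₀ (by positivity) h2 j
        have h4 : Real.exp (1/(j:ℝ)) ^ j = Real.exp 1 := by
          rw [← Real.exp_nat_mul]; congr 1; field_simp
        have h5 : Real.exp 1 ≤ 3 := by
          have := Real.exp_one_lt_d9; linarith
        have h6 : (1 + 1/(j:ℝ)) ^ j ≤ 3 := by rw [h4] at h3; linarith
        calc ((j:ℝ) + 1) ^ j = (j:ℝ) ^ j * (1 + 1/(j:ℝ)) ^ j := by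
              rw [h1, mul_pow]
          _ ≤ (j:ℝ) ^ j * 3 :=
              mul_le_mul_of_nonneg_left h6 (by positivity)
          _ = 3 * (j:ℝ) ^ j := by ring
    have hfac : ((j+1)! : ℝ) = ((j:ℝ)+1) * (j ! : ℝ) := by
      rw [Nat.factorial_succ]; push_cast; ring
    have step : ((j:ℝ)+1) ^ (j+1) ≤ 3 ^ (j+1) * ((j+1)! : ℝ) := by
      calc ((j:ℝ)+1) ^ (j+1) = ((j:ℝ)+1) ^ j * ((j:ℝ)+1) := by ring
        _ ≤ (3 * (j:ℝ) ^ j) * ((j:ℝ)+1) :=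
            mul_le_mul_of_nonneg_right hj3 (by positivity)
        _ ≤ (3 * (3 ^ j * (j ! : ℝ))) * ((j:ℝ)+1) := by
            apply mul_le_mul_of_nonneg_right _ (by positivity)
            exact mul_le_mul_of_nonneg_left ih (by norm_num)
        _ = 3 ^ (j+1) * (((j:ℝ)+1) * (j ! : ℝ)) := by ring
        _ = 3 ^ (j+1) * ((j+1)! : ℝ) := by rw [hfac]
    convert step using 2 <;> push_cast <;> ring

lemma aux_card_vanish {n : ℕ} {F : Type} [Field F] [Fintype F] [DecidableEq F]
    (W : Finset (Fin n)) :
    (univ.filter (fun g : Fin n → F => ∀ i ∈ W, g i = 0)).card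
      = Fintype.card F ^ (n - W.card) := by
  rw [← Fintype.card_subtype]
  have e : {g : Fin n → F // ∀ i ∈ W, g i = 0} ≃ ({ i : Fin n // i ∉ W } → F) :=
    { toFun := fun g i => g.1 i.1
      invFun := fun h => ⟨fun i => if hi : i ∈ W then 0 else h ⟨i, hi⟩,
        fun i hi => dif_pos hi⟩
      left_inv := fun g => Subtype.ext (funext fun i => by
        by_cases hi : i ∈ W
        · simp [hi, g.2 i hi]
        · simp [hi])
      right_inv := fun h => funext fun i => by simp [i.2] }
  rw [Fintype.card_congr e, Fintype.card_fun]
  congr 1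
  have : Fintype.card { i : Fin n // i ∉ W } = Fintype.card (Fin n) - Fintype.card {i : Fin n // i ∈ W} :=
    Fintype.card_subtype_compl _
  rw [this, Fintype.card_fin, Fintype.card_coe]

lemma aux_card_exact {n : ℕ} {F : Type} [Field F] [Fintype F] [DecidableEq F]
    (S : Finset (Fin n)) :
    (univ.filter (fun e : Fin n → F => ∀ i, e i = 0 ↔ i ∈ S)).card
      = (Fintype.card F - 1) ^ (n - S.card) := by
  rw [← Fintype.card_subtype]
  have e : {g : Fin n → F // ∀ i, g i = 0 ↔ i ∈ S} ≃ ({ i : Fin n // i ∉ S } → {x : F // x ≠ 0}) :=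
    { toFun := fun g i => ⟨g.1 i.1, fun h => i.2 ((g.2 i.1).mp h)⟩
      invFun := fun h => ⟨fun i => if hi : i ∈ S then 0 else (h ⟨i, hi⟩).1,
        fun i => by
          by_cases hi : i ∈ S
          · simp [hi]
          · simp [hi, (h ⟨i, hi⟩).2]⟩
      left_inv := fun g => Subtype.ext (funext fun i => by
        by_cases hi : i ∈ S
        · simp [hi, (g.2 i).mpr hi]
        · simp [hi])
      right_inv := fun h => funext fun i => by simp [i.2] }
  rw [Fintype.card_congr e, Fintype.card_fun]
  congr 1
  · have : Fintype.card {x : F // x ≠ 0} = Fintype.card F - Fintype.card {x : F // x = 0} :=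
      Fintype.card_subtype_compl _
    rw [this, Fintype.card_subtype_eq]
  · have : Fintype.card { i : Fin n // i ∉ S } = Fintype.card (Fin n) - Fintype.card {i : Fin n // i ∈ S} :=
      Fintype.card_subtype_compl _
    rw [this, Fintype.card_fin, Fintype.card_coe]

lemma aux_Ad {n k : ℕ} {F : Type} [Field F] [Fintype F] [DecidableEq F]
    (hk : 1 ≤ k) (h4 : 4*k ≤ n) (d : Fin n → F)
    (hz : (univ.filter (fun i => d i = 0)).card ≤ k - 1) :
    (univ.filter (fun e : Fin n → F =>
       (univ.filter (fun i => e i ≠ 0)).card ≤ n - 4*k ∧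
       4*k ≤ (univ.filter (fun i => d i = e i)).card)).card
    ≤ Nat.choose n (4*k) * (Nat.choose n (3*k+1) * Fintype.card F ^ (n - (7*k+1))) := by
  classical
  set A := (univ.filter (fun e : Fin n → F =>
       (univ.filter (fun i => e i ≠ 0)).card ≤ n - 4*k ∧
       4*k ≤ (univ.filter (fun i => d i = e i)).card)) with hA
  set P2 := ((powersetCard (4*k) (univ : Finset (Fin n))) ×ˢ
      (powersetCard (3*k+1) (univ : Finset (Fin n)))).filter
      (fun pr => Disjoint pr.1 pr.2) with hP2
  set Sig := P2.sigma (fun pr => univ.filter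
      (fun g : Fin n → F => ∀ i ∈ pr.1 ∪ pr.2, g i = 0)) with hSig
  -- choice functions
  set Sfun : (Fin n → F) → Finset (Fin n) := fun e =>
    if h : ∃ S ⊆ univ.filter (fun i => d i = e i), S.card = 4*k then h.choose else ∅
    with hSfun
  set Zfun : (Fin n → F) → Finset (Fin n) := fun e =>
    if h : ∃ Z ⊆ univ.filter (fun i => e i = 0 ∧ d i ≠ 0), Z.card = 3*k+1 then h.choose else ∅
    with hZfun
  have hSspec : ∀ e ∈ A, Sfun e ⊆ univ.filter (fun i => d i = e i) ∧ (Sfun e).card = 4*k := by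
    intro e he
    rw [hA, mem_filter] at he
    have hex : ∃ S ⊆ univ.filter (fun i => d i = e i), S.card = 4*k :=
      exists_subset_card_eq he.2.2
    rw [hSfun]; simp only [dif_pos hex]
    exact hex.choose_spec
  have hZspec : ∀ e ∈ A, Zfun e ⊆ univ.filter (fun i => e i = 0 ∧ d i ≠ 0)
      ∧ (Zfun e).card = 3*k+1 := by
    intro e he
    rw [hA, mem_filter] at he
    have h0 : univ.filter (fun i => e i = 0) = (univ.filter (fun i => e i ≠ 0))ᶜ := by
      ext i; simp [not_not]
    have hwtle : (univ.filter (fun i => e i ≠ 0)).card ≤ n := by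
      calc _ ≤ (univ : Finset (Fin n)).card := card_filter_le _ _
        _ = n := by rw [card_univ, Fintype.card_fin]
    have h0card : 4*k ≤ (univ.filter (fun i => e i = 0)).card := by
      rw [h0, card_compl, Fintype.card_fin]
      omega
    have hsd : (univ.filter (fun i => e i = 0)) \ (univ.filter (fun i => d i = 0))
        ⊆ univ.filter (fun i => e i = 0 ∧ d i ≠ 0) := by
      intro i hi
      rw [mem_sdiff, mem_filter, mem_filter] at hi
      rw [mem_filter]
      exact ⟨mem_univ _, hi.1.2, fun h => hi.2 ⟨mem_univ _, h⟩⟩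
    have hzcard : 3*k+1 ≤ (univ.filter (fun i => e i = 0 ∧ d i ≠ 0)).card := by
      have h1 := le_card_sdiff (univ.filter (fun i => d i = 0)) (univ.filter (fun i => e i = 0))
      have h2 := card_le_card hsd
      omega
    have hex : ∃ Z ⊆ univ.filter (fun i => e i = 0 ∧ d i ≠ 0), Z.card = 3*k+1 :=
      exists_subset_card_eq hzcard
    rw [hZfun]; simp only [dif_pos hex]
    exact hex.choose_spec
  -- the injection
  set ψ : (Fin n → F) → ((_ : Finset (Fin n) × Finset (Fin n)) × (Fin n → F)) := fun e =>
    ⟨(Sfun e, Zfun e), fun i => if i ∈ Sfun e ∪ Zfun e then 0 else e i - d i⟩ with hψ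
  have hmaps : ∀ e ∈ A, ψ e ∈ Sig := by
    intro e he
    obtain ⟨hS1, hS2⟩ := hSspec e he
    obtain ⟨hZ1, hZ2⟩ := hZspec e he
    have hdisj : Disjoint (Sfun e) (Zfun e) := by
      rw [Finset.disjoint_left]
      intro i hiS hiZ
      have h1 := mem_filter.mp (hS1 hiS)
      have h2 := mem_filter.mp (hZ1 hiZ)
      exact h2.2.2 (h1.2.trans h2.2.1)
    rw [hSig, mem_sigma]
    constructor
    · rw [hP2, mem_filter, mem_product]
      exact ⟨⟨mem_powersetCard.mpr ⟨subset_univ _, hS2⟩,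
        mem_powersetCard.mpr ⟨subset_univ _, hZ2⟩⟩, hdisj⟩
    · rw [mem_filter]
      exact ⟨mem_univ _, fun i hi => if_pos hi⟩
  have hinj : Set.InjOn ψ (A : Set (Fin n → F)) := by
    intro e₁ he₁ e₂ he₂ heq
    rw [Finset.mem_coe] at he₁ he₂
    rw [hψ] at heq
    simp only [Sigma.mk.inj_iff, Prod.mk.injEq] at heq
    obtain ⟨⟨hSeq, hZeq⟩, hgeq⟩ := heq
    have hg := eq_of_heq hgeq
    funext i
    by_cases hiS : i ∈ Sfun e₁
    · have h1 := mem_filter.mp ((hSspec e₁ he₁).1 hiS)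
      have h2 := mem_filter.mp ((hSspec e₂ he₂).1 (hSeq ▸ hiS))
      rw [← h1.2, ← h2.2]
    · by_cases hiZ : i ∈ Zfun e₁
      · have h1 := mem_filter.mp ((hZspec e₁ he₁).1 hiZ)
        have h2 := mem_filter.mp ((hZspec e₂ he₂).1 (hZeq ▸ hiZ))
        rw [h1.2.1, h2.2.1]
      · have hni : i ∉ Sfun e₁ ∪ Zfun e₁ := by
          rw [mem_union]; tauto
        have hni2 : i ∉ Sfun e₂ ∪ Zfun e₂ := by
          rw [← hSeq, ← hZeq]; exact hni
        have hgi := congrFun hg i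
        rw [if_neg hni, if_neg hni2] at hgi
        exact sub_left_inj.mp hgi
  have hcard1 : A.card ≤ Sig.card := card_le_card_of_injOn ψ hmaps hinj
  have hcard2 : Sig.card = P2.card * Fintype.card F ^ (n - (7*k+1)) := by
    rw [hSig, card_sigma]
    calc ∑ pr ∈ P2, (univ.filter (fun g : Fin n → F => ∀ i ∈ pr.1 ∪ pr.2, g i = 0)).card
        = ∑ pr ∈ P2, Fintype.card F ^ (n - (7*k+1)) := by
          apply Finset.sum_congr rfl
          intro pr hpr
          rw [hP2, mem_filter, mem_product] at hpr
          obtain ⟨⟨hp1, hp2⟩, hpd⟩ := hpr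
          rw [aux_card_vanish]
          congr 2
          rw [card_union_of_disjoint hpd, (mem_powersetCard.mp hp1).2,
            (mem_powersetCard.mp hp2).2]
          omega
      _ = P2.card * Fintype.card F ^ (n - (7*k+1)) := by
          rw [Finset.sum_const, smul_eq_mul]
  have hcard3 : P2.card ≤ Nat.choose n (4*k) * Nat.choose n (3*k+1) := by
    calc P2.card ≤ ((powersetCard (4*k) (univ : Finset (Fin n))) ×ˢ
        (powersetCard (3*k+1) (univ : Finset (Fin n)))).card := card_filter_le _ _
      _ = Nat.choose n (4*k) * Nat.choose n (3*k+1) := by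
          rw [card_product, card_powersetCard, card_powersetCard, card_univ, Fintype.card_fin]
  calc A.card ≤ Sig.card := hcard1
    _ = P2.card * Fintype.card F ^ (n - (7*k+1)) := hcard2
    _ ≤ (Nat.choose n (4*k) * Nat.choose n (3*k+1)) * Fintype.card F ^ (n - (7*k+1)) :=
        Nat.mul_le_mul_right _ hcard3
    _ = _ := by ring

-- T lower bound
lemma aux_T_lower {n k : ℕ} {F : Type} [Field F] [Fintype F] [DecidableEq F] :
    Nat.choose n (4*k) * (Fintype.card F - 1) ^ (n - 4*k)
      ≤ (univ.filter (fun e : Fin n → F =>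
          (univ.filter (fun i => e i ≠ 0)).card ≤ n - 4*k)).card := by
  classical
  set 𝒮 := powersetCard (4*k) (univ : Finset (Fin n)) with h𝒮
  have hsub : 𝒮.biUnion (fun S => univ.filter (fun e : Fin n → F => ∀ i, e i = 0 ↔ i ∈ S))
      ⊆ univ.filter (fun e : Fin n → F => (univ.filter (fun i => e i ≠ 0)).card ≤ n - 4*k) := by
    intro e he
    simp only [mem_biUnion] at he
    obtain ⟨S, hS, he⟩ := he
    rw [mem_filter] at he ⊢
    refine ⟨mem_univ _, ?_⟩
    obtain ⟨-, hScard⟩ := mem_powersetCard.mp hS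
    have : univ.filter (fun i => e i ≠ 0) = Sᶜ := by
      ext i
      simp only [mem_filter, mem_univ, true_and, mem_compl]
      rw [← he.2 i]
    rw [this, card_compl, Fintype.card_fin, hScard]
  have hdisj : ∀ S₁ ∈ 𝒮, ∀ S₂ ∈ 𝒮, S₁ ≠ S₂ →
      Disjoint (univ.filter (fun e : Fin n → F => ∀ i, e i = 0 ↔ i ∈ S₁))
        (univ.filter (fun e : Fin n → F => ∀ i, e i = 0 ↔ i ∈ S₂)) := by
    intro S₁ _ S₂ _ hne
    rw [Finset.disjoint_left]
    intro e he1 he2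
    rw [mem_filter] at he1 he2
    exact hne (by ext i; rw [← he1.2 i, ← he2.2 i])
  have hbu := card_biUnion hdisj
  have hTcard : Nat.choose n (4*k) * (Fintype.card F - 1) ^ (n - 4*k)
      = ∑ S ∈ 𝒮, (univ.filter (fun e : Fin n → F => ∀ i, e i = 0 ↔ i ∈ S)).card := by
    rw [Finset.sum_congr rfl (fun S hS => ?_), Finset.sum_const, h𝒮, card_powersetCard,
      card_univ, Fintype.card_fin, smul_eq_mul]
    rw [aux_card_exact S, (mem_powersetCard.mp hS).2]
  calc Nat.choose n (4*k) * (Fintype.card F - 1) ^ (n - 4*k)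
      = _ := hTcard
    _ = _ := hbu.symm
    _ ≤ _ := card_le_card hsub

/-- Corollary 1: there is an absolute constant `c₀ > 0` such that for
any Reed-Solomon code of dimension `k` and block length `n` over `F_q` with
`q > (n/k)²`, for every codeword `c`, for at least a `1 − q^{−c₀ k}` fraction of error
patterns `e` of Hamming weight at most `n − 4k`, the only codeword agreeing with
`c + e` in at least `4k` positions is `c` itself. -/
theorem stmt_12 :
    ∃ c₀ : ℝ, 0 < c₀ ∧
      ∀ (F : Type) [Field F] [Fintype F] [DecidableEq F] (n k : ℕ),
        1 ≤ k → 4 * k ≤ n → n < Fintype.card F →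
        ((n : ℝ) / k) ^ 2 < (Fintype.card F : ℝ) →
        ∀ (a : Fin n → F), Function.Injective a →
        ∀ (RS : Set (Fin n → F)),
          RS = {v : Fin n → F | ∃ p : F[X], p.degree < k ∧ ∀ i, v i = p.eval (a i)} →
        ∀ c ∈ RS,
          (1 - (Fintype.card F : ℝ) ^ (-(c₀ * k))) *
            ((Finset.univ.filter (fun e : Fin n → F =>
              (Finset.univ.filter (fun i => e i ≠ 0)).card ≤ n - 4 * k)).card : ℝ)
          ≤ ((Finset.univ.filter (fun e : Fin n → F =>
              (Finset.univ.filter (fun i => e i ≠ 0)).card ≤ n - 4 * k ∧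
              ∀ c' ∈ RS,
                4 * k ≤ (Finset.univ.filter (fun i => c' i = c i + e i)).card →
                c' = c)).card : ℝ) := by
  refine ⟨1/4, by norm_num, ?_⟩
  intro F _ _ _ n k hk h4 hnq hq2 a ha RS hRS c hc
  classical
  -- abbreviations
  have hsplit : (univ.filter (fun e : Fin n → F =>
        (univ.filter (fun i => e i ≠ 0)).card ≤ n - 4 * k ∧
        ∀ c' ∈ RS, 4 * k ≤ (univ.filter (fun i => c' i = c i + e i)).card → c' = c)).card
      + (univ.filter (fun e : Fin n → F =>
        (univ.filter (fun i => e i ≠ 0)).card ≤ n - 4 * k ∧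
        ¬ (∀ c' ∈ RS, 4 * k ≤ (univ.filter (fun i => c' i = c i + e i)).card → c' = c))).card
      = (univ.filter (fun e : Fin n → F =>
        (univ.filter (fun i => e i ≠ 0)).card ≤ n - 4 * k)).card := by
    rw [← filter_filter, ← filter_filter]
    exact card_filter_add_card_filter_not _
  -- the key bound
  have key : ((univ.filter (fun e : Fin n → F =>
        (univ.filter (fun i => e i ≠ 0)).card ≤ n - 4 * k ∧
        ¬ (∀ c' ∈ RS, 4 * k ≤ (univ.filter (fun i => c' i = c i + e i)).card → c' = c))).card : ℝ)
      ≤ (Fintype.card F : ℝ) ^ (-((1:ℝ)/4 * k)) *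
        ((univ.filter (fun e : Fin n → F =>
          (univ.filter (fun i => e i ≠ 0)).card ≤ n - 4 * k)).card : ℝ) := by
      classical
      set D := univ.filter (fun v : Fin n → F => v ∈ RS ∧ v ≠ 0) with hD
      have hzeros : ∀ v ∈ D, (univ.filter (fun i => v i = 0)).card ≤ k - 1 := by
        intro v hv
        rw [hD, mem_filter] at hv
        obtain ⟨-, hvRS, hv0⟩ := hv
        rw [hRS] at hvRS
        obtain ⟨p, hpdeg, hpe⟩ := hvRS
        have hp0 : p ≠ 0 := by
          rintro rfl
          exact hv0 (funext fun i => by simpa using hpe i)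
        have hnd : p.natDegree < k := (natDegree_lt_iff_degree_lt hp0).mpr hpdeg
        have hmap : ∀ i ∈ univ.filter (fun i => v i = 0), a i ∈ p.roots.toFinset := by
          intro i hi
          rw [mem_filter] at hi
          rw [Multiset.mem_toFinset, mem_roots hp0]
          show p.eval (a i) = 0
          rw [← hpe i]; exact hi.2
        calc (univ.filter (fun i => v i = 0)).card ≤ p.roots.toFinset.card :=
              card_le_card_of_injOn a hmap ha.injOn
          _ ≤ Multiset.card p.roots := Multiset.toFinset_card_le _
          _ ≤ p.natDegree := p.card_roots'
          _ ≤ k - 1 := Nat.le_pred_of_lt hnd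
      have hDcard : D.card ≤ Fintype.card F ^ k := by
        set f : (Fin n → F) → (Fin k → F) := fun v =>
          if h : ∃ p : F[X], p.degree < (k : ℕ) ∧ ∀ i, v i = p.eval (a i)
          then (fun j => h.choose.coeff j) else 0 with hf
        have hinj : Set.InjOn f (D : Set (Fin n → F)) := by
          intro v₁ hv₁ v₂ hv₂ hfeq
          rw [Finset.mem_coe, hD, mem_filter] at hv₁ hv₂
          have h₁ : ∃ p : F[X], p.degree < (k:ℕ) ∧ ∀ i, v₁ i = p.eval (a i) := by
            have := hv₁.2.1; rw [hRS] at this; exact this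
          have h₂ : ∃ p : F[X], p.degree < (k:ℕ) ∧ ∀ i, v₂ i = p.eval (a i) := by
            have := hv₂.2.1; rw [hRS] at this; exact this
          rw [hf] at hfeq
          simp only [dif_pos h₁, dif_pos h₂] at hfeq
          obtain ⟨hd₁, he₁⟩ := h₁.choose_spec
          obtain ⟨hd₂, he₂⟩ := h₂.choose_spec
          have hpp : h₁.choose = h₂.choose := by
            ext m
            by_cases hm : m < k
            · exact congrFun hfeq ⟨m, hm⟩
            · rw [coeff_eq_zero_of_degree_lt (lt_of_lt_of_le hd₁ ?_),
                coeff_eq_zero_of_degree_lt (lt_of_lt_of_le hd₂ ?_)]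
              · exact_mod_cast Nat.le_of_not_lt hm
              · exact_mod_cast Nat.le_of_not_lt hm
          funext i
          rw [he₁ i, he₂ i, hpp]
        calc D.card ≤ (univ : Finset (Fin k → F)).card :=
              card_le_card_of_injOn f (fun _ _ => mem_univ _) hinj
          _ = Fintype.card F ^ k := by rw [card_univ, Fintype.card_fun, Fintype.card_fin]
      have hBadSub : (univ.filter (fun e : Fin n → F =>
            (univ.filter (fun i => e i ≠ 0)).card ≤ n - 4 * k ∧
            ¬ (∀ c' ∈ RS, 4 * k ≤ (univ.filter (fun i => c' i = c i + e i)).card → c' = c)))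
          ⊆ D.biUnion (fun d => univ.filter (fun e : Fin n → F =>
            (univ.filter (fun i => e i ≠ 0)).card ≤ n - 4 * k ∧
            4*k ≤ (univ.filter (fun i => d i = e i)).card)) := by
        intro e he
        rw [mem_filter] at he
        obtain ⟨-, hwt, hnP⟩ := he
        push_neg at hnP
        obtain ⟨c', hc'RS, hagr, hne⟩ := hnP
        rw [mem_biUnion]
        refine ⟨c' - c, ?_, ?_⟩
        · rw [hD, mem_filter]
          refine ⟨mem_univ _, ?_, sub_ne_zero.mpr hne⟩
          rw [hRS] at hc'RS hc ⊢
          obtain ⟨p', hp', hpe'⟩ := hc'RS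
          obtain ⟨p, hp, hpe⟩ := hc
          exact ⟨p' - p, lt_of_le_of_lt (degree_sub_le _ _) (max_lt hp' hp),
            fun i => by simp [Pi.sub_apply, hpe i, hpe' i]⟩
        · rw [mem_filter]
          refine ⟨mem_univ _, hwt, ?_⟩
          have heq : (univ.filter (fun i => (c' - c) i = e i))
              = (univ.filter (fun i => c' i = c i + e i)) := by
            ext i
            simp only [mem_filter, mem_univ, true_and, Pi.sub_apply, sub_eq_iff_eq_add']
          rw [heq]; exact hagr
      by_cases hn7 : 7*k + 1 ≤ n
      · -- main case
        have hb : (univ.filter (fun e : Fin n → F =>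
              (univ.filter (fun i => e i ≠ 0)).card ≤ n - 4 * k ∧
              ¬ (∀ c' ∈ RS, 4 * k ≤ (univ.filter (fun i => c' i = c i + e i)).card → c' = c))).card
            ≤ Fintype.card F ^ k * (Nat.choose n (4*k) * (Nat.choose n (3*k+1) *
                Fintype.card F ^ (n - (7*k+1)))) := by
          calc _ ≤ (D.biUnion (fun d => univ.filter (fun e : Fin n → F =>
                  (univ.filter (fun i => e i ≠ 0)).card ≤ n - 4 * k ∧
                  4*k ≤ (univ.filter (fun i => d i = e i)).card))).card := card_le_card hBadSub
            _ ≤ ∑ d ∈ D, (univ.filter (fun e : Fin n → F =>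
                  (univ.filter (fun i => e i ≠ 0)).card ≤ n - 4 * k ∧
                  4*k ≤ (univ.filter (fun i => d i = e i)).card)).card := card_biUnion_le
            _ ≤ ∑ _d ∈ D, (Nat.choose n (4*k) * (Nat.choose n (3*k+1) *
                  Fintype.card F ^ (n - (7*k+1)))) :=
                Finset.sum_le_sum (fun d hd => aux_Ad hk h4 d (hzeros d hd))
            _ = D.card * (Nat.choose n (4*k) * (Nat.choose n (3*k+1) *
                  Fintype.card F ^ (n - (7*k+1)))) := by rw [Finset.sum_const, smul_eq_mul]
            _ ≤ _ := Nat.mul_le_mul_right _ hDcard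
        have ht := aux_T_lower (n := n) (k := k) (F := F)
        -- real arithmetic
        have hkpos : (0:ℝ) < k := by exact_mod_cast hk
        have hq17 : (17:ℝ) ≤ (Fintype.card F : ℝ) := by
          have h16 : (4:ℝ) ≤ (n:ℝ)/k := by
            rw [le_div_iff₀ hkpos]
            exact_mod_cast h4
          have h16' : (16:ℝ) < (Fintype.card F : ℝ) := by nlinarith
          have h16'' : (16:ℕ) < Fintype.card F := by norm_cast at h16'
          have h17 : (17:ℕ) ≤ Fintype.card F := h16''
          exact_mod_cast h17
        have hnQ : (n:ℝ) ≤ (Fintype.card F : ℝ) - 1 := by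
          have h1 : n + 1 ≤ Fintype.card F := hnq
          have h2 : ((n:ℝ)) + 1 ≤ (Fintype.card F : ℝ) := by exact_mod_cast h1
          linarith
        set Q : ℝ := (Fintype.card F : ℝ) with hQ
        have hQ0 : (0:ℝ) < Q := by linarith
        have hQ1 : (1:ℝ) < Q := by linarith
        have hnk : (n:ℝ)/k ≤ Real.sqrt Q := (Real.le_sqrt (by positivity) hQ0.le).mpr hq2.le
        have hC3 : ((Nat.choose n (3*k+1) : ℕ) : ℝ) ≤ Real.sqrt Q ^ (3*k+1) := by
          set j := 3*k+1 with hj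
          have hjpos : (0:ℝ) < (j:ℝ) := by positivity
          have h1 : ((n.choose j : ℕ):ℝ) ≤ (n:ℝ)^j / (j ! : ℝ) := Nat.choose_le_pow_div j n
          have h2 : (j:ℝ)^j ≤ 3^j * (j ! : ℝ) := aux_pow_le_three_pow_mul_factorial j
          have hfact : (0:ℝ) < (j ! : ℝ) := by exact_mod_cast j.factorial_pos
          have h3 : (n:ℝ)^j / (j ! : ℝ) ≤ (3*(n:ℝ)/(j:ℝ))^j := by
            rw [div_le_iff₀ hfact, div_pow, div_mul_eq_mul_div, le_div_iff₀ (by positivity)]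
            calc (n:ℝ)^j * (j:ℝ)^j ≤ (n:ℝ)^j * (3^j * (j ! :ℝ)) :=
                  mul_le_mul_of_nonneg_left h2 (by positivity)
              _ = (3*(n:ℝ))^j * (j ! :ℝ) := by rw [mul_pow]; ring
          have h4' : 3*(n:ℝ)/(j:ℝ) ≤ (n:ℝ)/(k:ℝ) := by
            rw [div_le_div_iff₀ hjpos hkpos]
            have hjc : ((j:ℕ):ℝ) = 3*(k:ℝ)+1 := by rw [hj]; push_cast; ring
            rw [hjc]
            nlinarith [show (0:ℝ) ≤ (n:ℝ) from by positivity]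
          calc ((n.choose j:ℕ):ℝ) ≤ (n:ℝ)^j / (j ! : ℝ) := h1
            _ ≤ (3*(n:ℝ)/(j:ℝ))^j := h3
            _ ≤ (Real.sqrt Q)^j := pow_le_pow_left₀ (by positivity) (le_trans h4' hnk) j
        have hcastq1 : ((Fintype.card F - 1 : ℕ):ℝ) = Q - 1 := by
          have h1 : 1 ≤ Fintype.card F := Fintype.card_pos
          rw [Nat.cast_sub h1]; simp [hQ]
        have hQm1pos : (0:ℝ) < Q - 1 := by linarith
        have hqm1 : Q ^ (n - 4*k) / 3 ≤ (Q - 1) ^ (n - 4*k) := by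
          have hm : ((n - 4*k : ℕ):ℝ) ≤ Q - 1 := by
            have h1 : (n - 4*k : ℕ) ≤ n := Nat.sub_le _ _
            have h2 : ((n - 4*k : ℕ):ℝ) ≤ (n:ℝ) := by exact_mod_cast h1
            linarith
          have hexp : (Q / (Q-1)) ^ (n-4*k) ≤ 3 := by
            have e2 : Q/(Q-1) ≤ Real.exp (1/(Q-1)) := by
              have e1 : Q/(Q-1) = 1/(Q-1) + 1 := by field_simp; ring
              rw [e1]; exact Real.add_one_le_exp _
            have e3 : (Q/(Q-1))^(n-4*k) ≤ Real.exp (1/(Q-1)) ^ (n-4*k) :=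
              pow_le_pow_left₀ (by positivity) e2 _
            have e4 : Real.exp (1/(Q-1)) ^ (n-4*k) = Real.exp (((n-4*k : ℕ):ℝ) * (1/(Q-1))) := by
              rw [Real.exp_nat_mul]
            have e5 : ((n-4*k:ℕ):ℝ) * (1/(Q-1)) ≤ 1 := by
              rw [mul_one_div, div_le_one hQm1pos]; exact hm
            have e7 : Real.exp 1 ≤ 3 := by have := Real.exp_one_lt_d9; linarith
            calc (Q/(Q-1))^(n-4*k) ≤ Real.exp (1/(Q-1)) ^ (n-4*k) := e3
              _ = Real.exp (((n-4*k:ℕ):ℝ) * (1/(Q-1))) := e4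
              _ ≤ Real.exp 1 := Real.exp_le_exp.mpr e5
              _ ≤ 3 := e7
          have hsplitQ : Q ^ (n-4*k) = (Q-1)^(n-4*k) * (Q/(Q-1))^(n-4*k) := by
            rw [← mul_pow]; congr 1; field_simp
          rw [hsplitQ, div_le_iff₀ (by norm_num : (0:ℝ) < 3)]
          exact mul_le_mul_of_nonneg_left hexp (le_of_lt (pow_pos hQm1pos _))
        have h3Q : (3:ℝ) ≤ Q ^ ((3:ℝ)/4) := by
          have ha1 : ((17:ℝ) ^ ((3:ℝ)/4)) ^ (4:ℕ) = (17:ℝ)^(3:ℕ) := by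
            rw [← Real.rpow_natCast ((17:ℝ) ^ ((3:ℝ)/4)) 4, ← Real.rpow_mul (by norm_num)]
            norm_num
          have ha2 : (3:ℝ) ≤ (17:ℝ) ^ ((3:ℝ)/4) := by
            apply le_of_pow_le_pow_left₀ (by norm_num : (4:ℕ) ≠ 0) (Real.rpow_nonneg (by norm_num) _)
            rw [ha1]; norm_num
          calc (3:ℝ) ≤ (17:ℝ)^((3:ℝ)/4) := ha2
            _ ≤ Q ^ ((3:ℝ)/4) := Real.rpow_le_rpow (by norm_num) hq17 (by norm_num)
        -- put everything together
        set A : ℝ := (k:ℝ) + (3*(k:ℝ)+1)/2 + ((n:ℝ) - 7*(k:ℝ) - 1) with hA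
        have hC4pos : (0:ℝ) < ((Nat.choose n (4*k) : ℕ):ℝ) := by
          exact_mod_cast Nat.choose_pos h4
        have hbR : ((univ.filter (fun e : Fin n → F =>
              (univ.filter (fun i => e i ≠ 0)).card ≤ n - 4 * k ∧
              ¬ (∀ c' ∈ RS, 4 * k ≤ (univ.filter (fun i => c' i = c i + e i)).card → c' = c))).card : ℝ)
            ≤ ((Nat.choose n (4*k) : ℕ):ℝ) * Q ^ A := by
          have hcast : ((univ.filter (fun e : Fin n → F =>
              (univ.filter (fun i => e i ≠ 0)).card ≤ n - 4 * k ∧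
              ¬ (∀ c' ∈ RS, 4 * k ≤ (univ.filter (fun i => c' i = c i + e i)).card → c' = c))).card : ℝ)
              ≤ Q^k * (((Nat.choose n (4*k):ℕ):ℝ) * (((Nat.choose n (3*k+1):ℕ):ℝ) *
                Q ^ (n - (7*k+1)))) := by
            rw [hQ]
            exact_mod_cast hb
          have hstep : Q^k * (((Nat.choose n (4*k):ℕ):ℝ) * (((Nat.choose n (3*k+1):ℕ):ℝ) *
                Q ^ (n - (7*k+1))))
              ≤ Q^k * (((Nat.choose n (4*k):ℕ):ℝ) * ((Real.sqrt Q ^ (3*k+1)) *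
                Q ^ (n - (7*k+1)))) := by
            apply mul_le_mul_of_nonneg_left _ (by positivity)
            apply mul_le_mul_of_nonneg_left _ (by positivity)
            apply mul_le_mul_of_nonneg_right hC3 (by positivity)
          have hrw : Q^k * (((Nat.choose n (4*k):ℕ):ℝ) * ((Real.sqrt Q ^ (3*k+1)) *
                Q ^ (n - (7*k+1)))) = ((Nat.choose n (4*k):ℕ):ℝ) * Q ^ A := by
            have e1 : (Q:ℝ)^(k:ℕ) = Q ^ ((k:ℕ):ℝ) := (Real.rpow_natCast Q k).symm
            have e2 : (Real.sqrt Q)^(3*k+1) = Q ^ ((3*(k:ℝ)+1)/2) := by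
              rw [Real.sqrt_eq_rpow, ← Real.rpow_natCast (Q ^ ((1:ℝ)/2)) (3*k+1),
                ← Real.rpow_mul hQ0.le]
              congr 1; push_cast; ring
            have e3 : (Q:ℝ)^((n - (7*k+1)) : ℕ) = Q ^ ((n:ℝ) - 7*(k:ℝ) - 1) := by
              rw [← Real.rpow_natCast Q (n - (7*k+1))]
              congr 1
              rw [Nat.cast_sub hn7]; push_cast; ring
            rw [e1, e2, e3, hA, Real.rpow_add hQ0, Real.rpow_add hQ0]
            push_cast
            ring
          calc _ ≤ _ := hcast
            _ ≤ _ := hstep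
            _ = _ := hrw
        have htR : ((Nat.choose n (4*k):ℕ):ℝ) * (Q ^ ((n:ℝ) - 4*(k:ℝ)) / 3)
            ≤ ((univ.filter (fun e : Fin n → F =>
              (univ.filter (fun i => e i ≠ 0)).card ≤ n - 4 * k)).card : ℝ) := by
          have hcast : ((Nat.choose n (4*k):ℕ):ℝ) * ((Q - 1) ^ (n - 4*k))
              ≤ ((univ.filter (fun e : Fin n → F =>
                (univ.filter (fun i => e i ≠ 0)).card ≤ n - 4 * k)).card : ℝ) := by
            rw [← hcastq1]
            exact_mod_cast ht
          have e4 : Q^((n-4*k) : ℕ) = Q ^ ((n:ℝ) - 4*(k:ℝ)) := by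
            rw [← Real.rpow_natCast Q (n-4*k)]
            congr 1
            rw [Nat.cast_sub h4]; push_cast; ring
          have h5 : ((Nat.choose n (4*k):ℕ):ℝ) * (Q ^ ((n:ℝ) - 4*(k:ℝ)) / 3)
              ≤ ((Nat.choose n (4*k):ℕ):ℝ) * ((Q - 1) ^ (n - 4*k)) := by
            apply mul_le_mul_of_nonneg_left _ hC4pos.le
            rw [← e4]; exact hqm1
          linarith
        have hQA : Q ^ A * 3 ≤ Q ^ (((n:ℝ) - 4*(k:ℝ)) + (-((1:ℝ)/4 * (k:ℝ)))) := by
          have hBA : ((n:ℝ) - 4*(k:ℝ)) + (-((1:ℝ)/4 * (k:ℝ))) = A + ((k:ℝ)/4 + 1/2) := by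
            rw [hA]; ring
          have hmono : Q ^ ((3:ℝ)/4) ≤ Q ^ ((k:ℝ)/4 + 1/2) := by
            apply (Real.rpow_le_rpow_left_iff hQ1).mpr
            have : (1:ℝ) ≤ (k:ℝ) := by exact_mod_cast hk
            linarith
          have hApos : (0:ℝ) < Q ^ A := Real.rpow_pos_of_pos hQ0 A
          calc Q ^ A * 3 ≤ Q ^ A * Q ^ ((k:ℝ)/4 + 1/2) := by nlinarith
            _ = Q ^ (A + ((k:ℝ)/4 + 1/2)) := (Real.rpow_add hQ0 A _).symm
            _ = Q ^ (((n:ℝ) - 4*(k:ℝ)) + (-((1:ℝ)/4 * (k:ℝ)))) := by rw [hBA]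
        have hfin : ((Nat.choose n (4*k):ℕ):ℝ) * Q ^ A
            ≤ Q ^ (-((1:ℝ)/4 * (k:ℝ))) * ((univ.filter (fun e : Fin n → F =>
              (univ.filter (fun i => e i ≠ 0)).card ≤ n - 4 * k)).card : ℝ) := by
          have hεpos : (0:ℝ) < Q ^ (-((1:ℝ)/4 * (k:ℝ))) := Real.rpow_pos_of_pos hQ0 _
          have h5 : Q ^ (-((1:ℝ)/4 * (k:ℝ))) * (((Nat.choose n (4*k):ℕ):ℝ) *
                (Q ^ ((n:ℝ) - 4*(k:ℝ)) / 3))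
              ≤ Q ^ (-((1:ℝ)/4 * (k:ℝ))) * ((univ.filter (fun e : Fin n → F =>
                (univ.filter (fun i => e i ≠ 0)).card ≤ n - 4 * k)).card : ℝ) :=
            mul_le_mul_of_nonneg_left htR hεpos.le
          have h6 : Q ^ (-((1:ℝ)/4 * (k:ℝ))) * (((Nat.choose n (4*k):ℕ):ℝ) *
                (Q ^ ((n:ℝ) - 4*(k:ℝ)) / 3))
              = ((Nat.choose n (4*k):ℕ):ℝ) *
                (Q ^ (((n:ℝ) - 4*(k:ℝ)) + (-((1:ℝ)/4 * (k:ℝ)))) / 3) := by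
            rw [Real.rpow_add hQ0]; ring
          have h7 : ((Nat.choose n (4*k):ℕ):ℝ) * Q ^ A
              ≤ ((Nat.choose n (4*k):ℕ):ℝ) *
                (Q ^ (((n:ℝ) - 4*(k:ℝ)) + (-((1:ℝ)/4 * (k:ℝ)))) / 3) := by
            apply mul_le_mul_of_nonneg_left _ hC4pos.le
            linarith
          linarith
        calc _ ≤ ((Nat.choose n (4*k):ℕ):ℝ) * Q ^ A := hbR
          _ ≤ _ := hfin
      · -- degenerate case : bad set is empty
        have hBad0 : (univ.filter (fun e : Fin n → F =>
            (univ.filter (fun i => e i ≠ 0)).card ≤ n - 4 * k ∧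
            ¬ (∀ c' ∈ RS, 4 * k ≤ (univ.filter (fun i => c' i = c i + e i)).card → c' = c))) = ∅ := by
          rw [Finset.eq_empty_iff_forall_notMem]
          intro e he
          have hbi := hBadSub he
          rw [mem_biUnion] at hbi
          obtain ⟨d, hdD, hed⟩ := hbi
          rw [mem_filter] at hed
          obtain ⟨-, hwt, hagr⟩ := hed
          have hsub2 : (univ.filter (fun i => d i = e i)) \ (univ.filter (fun i => d i = 0))
              ⊆ univ.filter (fun i => e i ≠ 0) := by
            intro i hi
            rw [mem_sdiff, mem_filter, mem_filter] at hi
            rw [mem_filter]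
            refine ⟨mem_univ _, fun h0 => hi.2 ⟨mem_univ _, ?_⟩⟩
            rw [hi.1.2, h0]
          have hc1 := le_card_sdiff (univ.filter (fun i => d i = 0)) (univ.filter (fun i => d i = e i))
          have hc2 := card_le_card hsub2
          have hz := hzeros d hdD
          clear hsplit
          omega
        rw [hBad0]
        simp only [card_empty, Nat.cast_zero]
        positivity
  have hcast := hsplit
  have h1 : (0:ℝ) ≤ ((univ.filter (fun e : Fin n → F =>
        (univ.filter (fun i => e i ≠ 0)).card ≤ n - 4 * k ∧
        ∀ c' ∈ RS, 4 * k ≤ (univ.filter (fun i => c' i = c i + e i)).card → c' = c)).card : ℝ) := by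
    positivity
  have hR : (((univ.filter (fun e : Fin n → F =>
        (univ.filter (fun i => e i ≠ 0)).card ≤ n - 4 * k ∧
        ∀ c' ∈ RS, 4 * k ≤ (univ.filter (fun i => c' i = c i + e i)).card → c' = c)).card : ℝ)
      + ((univ.filter (fun e : Fin n → F =>
        (univ.filter (fun i => e i ≠ 0)).card ≤ n - 4 * k ∧
        ¬ (∀ c' ∈ RS, 4 * k ≤ (univ.filter (fun i => c' i = c i + e i)).card → c' = c))).card : ℝ))
      = ((univ.filter (fun e : Fin n → F =>
        (univ.filter (fun i => e i ≠ 0)).card ≤ n - 4 * k)).card : ℝ) := by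
    exact_mod_cast congrArg (Nat.cast : ℕ → ℝ) hsplit
  linarith [key, hR]
end

section
/- Let c^1, ..., c^J be codewords of a code C over F_{q^n} of block length N forming a (d, F_q)-independent tuple with witness sets S_1,...,S_J ⊆ [N] (|S_j| = d_j), and let G_1,...,G_N be independent uniformly random n × n matrices over F_q. For any fixed word y ∈ (F_q ∪ {?})^{nN}, the events E_j = '(c^j G) agrees with y at all unerased positions within the segments indexed by S_j' are mutually independent, where c^j G denotes the concatenated encoding (c^j_1 G_1, ..., c^j_N G_N). -/
set_option maxHeartbeats 1000000


open Finset Matrix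
open scoped Classical

/-- A family each of whose members is outside the span of the strictly earlier members
is linearly independent. -/
lemma li_of_earlier {F : Type*} [Field F] {ι : Type*} [LinearOrder ι]
    {M : Type*} [AddCommGroup M] [Module F M] (v : ι → M)
    (h : ∀ j, v j ∉ Submodule.span F (v '' {j' | j' < j})) :
    LinearIndependent F v := by
  rw [linearIndependent_iff']
  intro s g hsum
  by_contra hc
  push_neg at hc
  obtain ⟨i0, hi0s, hi0⟩ := hc
  set B := s.filter fun i => g i ≠ 0 with hB
  have hBne : B.Nonempty := ⟨i0, by simp [hB, hi0s, hi0]⟩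
  set j := B.max' hBne with hj
  have hjB : j ∈ B := B.max'_mem hBne
  have hgj : g j ≠ 0 := (Finset.mem_filter.mp hjB).2
  have hsum' : ∑ i ∈ B, g i • v i = 0 := by
    rw [← hsum]
    apply Finset.sum_subset (Finset.filter_subset _ _)
    intro x hx hxB
    have : g x = 0 := by
      by_contra h'
      exact hxB (Finset.mem_filter.mpr ⟨hx, h'⟩)
    simp [this]
  have h1 : g j • v j + ∑ i ∈ B.erase j, g i • v i = 0 :=
    (Finset.add_sum_erase B (fun i => g i • v i) hjB).trans hsum'
  have h2 : v j = (g j)⁻¹ • (-∑ i ∈ B.erase j, g i • v i) := by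
    rw [← eq_neg_of_add_eq_zero_left h1, smul_smul, inv_mul_cancel₀ hgj, one_smul]
  have hmem : ∀ i ∈ B.erase j, v i ∈ Submodule.span F (v '' {j' | j' < j}) := by
    intro i hi
    exact Submodule.subset_span
      ⟨i, lt_of_le_of_ne (B.le_max' i (Finset.mem_of_mem_erase hi)) (Finset.ne_of_mem_erase hi),
        rfl⟩
  exact h j (h2 ▸ Submodule.smul_mem _ _ (Submodule.neg_mem _
    (Submodule.sum_mem _ fun i hi => Submodule.smul_mem _ _ (hmem i hi))))

/-- Fibers of a surjective additive hom all have the same cardinality. -/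
lemma card_fiber_eq {α β : Type*} [Fintype α] [AddCommGroup α] [AddCommGroup β]
    (φ : α →+ β) (hs : Function.Surjective φ) (w : β) :
    (Finset.univ.filter fun a => φ a = w).card
      = (Finset.univ.filter fun a => φ a = (0 : β)).card := by
  obtain ⟨a0, ha0⟩ := hs w
  apply Finset.card_bij (fun a _ => a - a0)
  · intro a ha
    simp only [Finset.mem_filter, Finset.mem_univ, true_and] at ha ⊢
    rw [map_sub, ha, ha0, sub_self]
  · intro a _ b _ hab
    exact sub_left_injective hab
  · intro b hb
    refine ⟨b + a0, ?_, by simp⟩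
    simp only [Finset.mem_filter, Finset.mem_univ, true_and] at hb ⊢
    rw [map_add, hb, ha0, zero_add]

/-- Counting preimages of a finset under a surjective additive hom. -/
lemma count_preimage {α β : Type*} [Fintype α] [Fintype β] [AddCommGroup α] [AddCommGroup β]
    (φ : α →+ β) (hs : Function.Surjective φ) (W : Finset β)
    (p : α → Prop) [DecidablePred p] (hp : ∀ a, p a ↔ φ a ∈ W) :
    (Finset.univ.filter p).card * Fintype.card β = Fintype.card α * W.card := by
  classical
  rw [Finset.filter_congr (fun a _ => hp a)]
  set k := (Finset.univ.filter fun a => φ a = (0 : β)).card with hk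
  have h1 : (Finset.univ.filter fun a => φ a ∈ W).card = W.card * k := by
    rw [Finset.card_eq_sum_card_fiberwise
      (f := φ) (s := Finset.univ.filter fun a => φ a ∈ W) (t := W)
      (fun x hx => (Finset.mem_filter.mp hx).2)]
    rw [Finset.sum_congr rfl (fun w hw => ?_), Finset.sum_const, smul_eq_mul]
    have : ((Finset.univ.filter fun a => φ a ∈ W).filter fun a => φ a = w)
        = Finset.univ.filter fun a => φ a = w := by
      ext a
      simp only [Finset.mem_filter, Finset.mem_univ, true_and, and_iff_right_iff_imp]
      intro h; rw [h]; exact hw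
    rw [this, card_fiber_eq φ hs w]
  have h2 : Fintype.card α = Fintype.card β * k := by
    have := Finset.card_eq_sum_card_fiberwise
      (f := φ) (s := (Finset.univ : Finset α)) (t := (Finset.univ : Finset β))
      (fun x _ => Finset.mem_univ _)
    rw [Finset.sum_congr rfl (fun w _ => card_fiber_eq φ hs w), Finset.sum_const,
      smul_eq_mul] at this
    simp only [Finset.card_univ] at this
    exact this
  rw [h1, h2]; ring

/-- Cardinality of a filter over a pi type factors as a product. -/
lemma card_filter_pi_eq {κ : Type*} [Fintype κ] [DecidableEq κ] {α : κ → Type*} [∀ k, Fintype (α k)]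
    (P : ∀ k, α k → Prop) [∀ k, DecidablePred (P k)]
    (p : (∀ k, α k) → Prop) [DecidablePred p] (hp : ∀ g, p g ↔ ∀ k, P k (g k)) :
    (Finset.univ.filter p).card
      = ∏ k, (Finset.univ.filter (P k)).card := by
  classical
  rw [← Fintype.card_piFinset]
  apply Finset.card_bij' (fun g _ => g) (fun g _ => g)
  · intro g hg
    simp only [Fintype.mem_piFinset, Finset.mem_filter, Finset.mem_univ, true_and]
    exact (hp g).mp (Finset.mem_filter.mp hg).2
  · intro g hg
    simp only [Fintype.mem_piFinset, Finset.mem_filter, Finset.mem_univ, true_and] at hg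
    exact Finset.mem_filter.mpr ⟨Finset.mem_univ _, (hp g).mpr hg⟩
  · intro g _; rfl
  · intro g _; rfl

/-- Key counting lemma: for a linearly independent family `v`, the number of matrices `M`
such that each `v j ᵥ* M` lies in a fixed finset `W` is `|Mat| * |W|^k / (q^n)^k`. -/
lemma key_count {F : Type*} [Field F] [Fintype F] {n : ℕ} {ι : Type*} [Fintype ι]
    (v : ι → Fin n → F) (hv : LinearIndependent F v) (W : Finset (Fin n → F)) :
    (Finset.univ.filter fun M : Matrix (Fin n) (Fin n) F => ∀ j, v j ᵥ* M ∈ W).card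
        * (Fintype.card (Fin n → F)) ^ (Fintype.card ι)
      = Fintype.card (Matrix (Fin n) (Fin n) F) * W.card ^ (Fintype.card ι) := by
  set φ : Matrix (Fin n) (Fin n) F →+ (ι → Fin n → F) :=
    { toFun := fun M => fun j => v j ᵥ* M
      map_zero' := by ext j p; simp [Matrix.vecMul_zero]
      map_add' := by intro A B; ext j p; simp [Matrix.vecMul_add] } with hφ
  have hsurj : Function.Surjective φ := by
    intro w
    obtain ⟨g, hg⟩ := (Finsupp.linearCombination F v).exists_leftInverse_of_injective
      (LinearMap.ker_eq_bot.mpr hv)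
    set f := (Finsupp.linearCombination F w).comp g with hf
    refine ⟨(LinearMap.toMatrix' f)ᵀ, ?_⟩
    funext j
    show v j ᵥ* (LinearMap.toMatrix' f)ᵀ = w j
    rw [Matrix.vecMul_transpose, ← Matrix.toLin'_apply, Matrix.toLin'_toMatrix']
    have hvj : v j = Finsupp.linearCombination F v (Finsupp.single j 1) := by
      rw [Finsupp.linearCombination_single, one_smul]
    rw [hf, LinearMap.comp_apply, hvj, ← LinearMap.comp_apply g,
      hg, LinearMap.id_apply, Finsupp.linearCombination_single, one_smul]
  have h := count_preimage φ hsurj (Fintype.piFinset fun _ : ι => W)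
      (fun M => ∀ j, v j ᵥ* M ∈ W)
      (fun M => by simp [Fintype.mem_piFinset, hφ])
  rw [Fintype.card_fun, Fintype.card_piFinset, Finset.prod_const, Finset.card_univ] at h
  exact h

/-- for a `(d, F_q)`-independent tuple of outer codewords with witness
sets `S₁,…,S_J` and independent uniformly random inner generator matrices
`G₁,…,G_N`, the events `E_j` = "`c^j G` agrees with `y` at all unerased positions in
the segments indexed by `S_j`" are mutually independent: for every subset `A` of the
indices, the probability of `⋂_{j∈A} E_j` equals the product of the probabilities. -/
theorem stmt_18 {F : Type*} [Field F] [Fintype F] (n N J : ℕ)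
    (c : Fin J → Fin N → (Fin n → F))
    (S : Fin J → Finset (Fin N)) (d : Fin J → ℕ) (hSd : ∀ j, (S j).card = d j)
    (hindep : ∀ j : Fin J, ∀ i ∈ S j,
      c j i ∉ Submodule.span F {x : Fin n → F | ∃ j' : Fin J, j' < j ∧ x = c j' i})
    (y : Fin N → Fin n → Option F) :
    ∀ A : Finset (Fin J),
      ((Finset.univ.filter (fun G : Fin N → Matrix (Fin n) (Fin n) F =>
          ∀ j ∈ A, ∀ i ∈ S j, ∀ p : Fin n, ∀ a : F,
            y i p = some a → Matrix.vecMul (c j i) (G i) p = a)).card : ℝ)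
        * (Fintype.card (Fin N → Matrix (Fin n) (Fin n) F) : ℝ) ^ (A.card)
      = (∏ j ∈ A, ((Finset.univ.filter (fun G : Fin N → Matrix (Fin n) (Fin n) F =>
          ∀ i ∈ S j, ∀ p : Fin n, ∀ a : F,
            y i p = some a → Matrix.vecMul (c j i) (G i) p = a)).card : ℝ))
        * (Fintype.card (Fin N → Matrix (Fin n) (Fin n) F) : ℝ) := by
  intro A
  -- abbreviations
  set W : Fin N → Finset (Fin n → F) :=
    fun i => Finset.univ.filter fun w => ∀ p a, y i p = some a → w p = a with hW
  set Q : ℕ := Fintype.card (Matrix (Fin n) (Fin n) F) with hQ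
  set qn : ℕ := Fintype.card (Fin n → F) with hqn
  have hQpos : 0 < Q := Fintype.card_pos
  have hqnpos : 0 < qn := Fintype.card_pos
  have hQR : (0 : ℝ) < (Q : ℝ) := by exact_mod_cast hQpos
  have hqnR : (0 : ℝ) < (qn : ℝ) := by exact_mod_cast hqnpos
  -- real-valued "success probability" per coordinate
  set wr : Fin N → ℝ := fun i => ((W i).card : ℝ) / (qn : ℝ) with hwr
  set t : Fin N → ℕ := fun i => (A.filter fun j => i ∈ S j).card with ht
  -- nonzeroness of c j i for i ∈ S j
  have hcne : ∀ j : Fin J, ∀ i ∈ S j, c j i ≠ 0 := by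
    intro j i hi h0
    exact hindep j i hi (h0 ▸ Submodule.zero_mem _)
  -- per-coordinate counts for the intersection event
  have hL : ∀ i : Fin N,
      ((Finset.univ.filter fun M : Matrix (Fin n) (Fin n) F =>
        ∀ j ∈ A, i ∈ S j → (c j i ᵥ* M) ∈ W i).card : ℝ)
      = (Q : ℝ) * wr i ^ t i := by
    intro i
    set T := A.filter fun j => i ∈ S j with hT
    have hli : LinearIndependent F (fun j : {j // j ∈ T} => c j.1 i) := by
      apply li_of_earlier
      intro j hspan
      have hiS : i ∈ S j.1 := (Finset.mem_filter.mp j.2).2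
      apply hindep j.1 i hiS
      refine Submodule.span_mono ?_ hspan
      rintro x ⟨j', hj', rfl⟩
      exact ⟨j'.1, hj', rfl⟩
    have hkey := key_count (fun j : {j // j ∈ T} => c j.1 i) hli (W i)
    rw [Fintype.card_coe] at hkey
    have hset : (Finset.univ.filter fun M : Matrix (Fin n) (Fin n) F =>
        ∀ j : {j // j ∈ T}, (c j.1 i ᵥ* M) ∈ W i)
        = Finset.univ.filter fun M : Matrix (Fin n) (Fin n) F =>
          ∀ j ∈ A, i ∈ S j → (c j i ᵥ* M) ∈ W i := by
      ext M
      simp only [Finset.mem_filter, Finset.mem_univ, true_and]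
      constructor
      · intro h j hjA hjS
        exact h ⟨j, Finset.mem_filter.mpr ⟨hjA, hjS⟩⟩
      · intro h j
        exact h j.1 (Finset.mem_filter.mp j.2).1 (Finset.mem_filter.mp j.2).2
    rw [hset] at hkey
    have hcast : ((Finset.univ.filter fun M : Matrix (Fin n) (Fin n) F =>
        ∀ j ∈ A, i ∈ S j → (c j i ᵥ* M) ∈ W i).card : ℝ) * (qn : ℝ) ^ T.card
        = (Q : ℝ) * ((W i).card : ℝ) ^ T.card := by exact_mod_cast hkey
    have hti : t i = T.card := rfl
    rw [hti, hwr]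
    rw [div_pow, mul_div_assoc', eq_div_iff (by positivity)]
    linear_combination hcast
  -- per-coordinate count for a single event
  have hK : ∀ j : Fin J, ∀ i ∈ S j,
      ((Finset.univ.filter fun M : Matrix (Fin n) (Fin n) F =>
        (c j i ᵥ* M) ∈ W i).card : ℝ) = (Q : ℝ) * wr i := by
    intro j i hi
    have hli : LinearIndependent F (fun _ : Unit => c j i) :=
      linearIndependent_unique_iff.mpr (hcne j i hi)
    have hkey := key_count (fun _ : Unit => c j i) hli (W i)
    rw [Fintype.card_unit, pow_one, pow_one] at hkey
    have hset : (Finset.univ.filter fun M : Matrix (Fin n) (Fin n) F =>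
        ∀ _ : Unit, (c j i ᵥ* M) ∈ W i)
        = Finset.univ.filter fun M : Matrix (Fin n) (Fin n) F => (c j i ᵥ* M) ∈ W i := by
      ext M; simp
    rw [hset] at hkey
    have hcast : ((Finset.univ.filter fun M : Matrix (Fin n) (Fin n) F =>
        (c j i ᵥ* M) ∈ W i).card : ℝ) * (qn : ℝ) = (Q : ℝ) * ((W i).card : ℝ) := by
      exact_mod_cast hkey
    rw [hwr]
    field_simp
    linear_combination hcast
  -- membership in W rephrased
  have hWmem : ∀ (i : Fin N) (v : Fin n → F),
      v ∈ W i ↔ ∀ p a, y i p = some a → v p = a := by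
    intro i v; simp [hW]
  -- total count of the intersection event
  have hLHS : ((Finset.univ.filter (fun G : Fin N → Matrix (Fin n) (Fin n) F =>
      ∀ j ∈ A, ∀ i ∈ S j, ∀ p : Fin n, ∀ a : F,
        y i p = some a → Matrix.vecMul (c j i) (G i) p = a)).card : ℝ)
      = ∏ i, ((Q : ℝ) * wr i ^ t i) := by
    have hre : (Finset.univ.filter (fun G : Fin N → Matrix (Fin n) (Fin n) F =>
        ∀ j ∈ A, ∀ i ∈ S j, ∀ p : Fin n, ∀ a : F,
          y i p = some a → Matrix.vecMul (c j i) (G i) p = a))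
        = Finset.univ.filter (fun G : Fin N → Matrix (Fin n) (Fin n) F =>
          ∀ i, ∀ j ∈ A, i ∈ S j → (c j i ᵥ* G i) ∈ W i) := by
      ext G
      simp only [Finset.mem_filter, Finset.mem_univ, true_and]
      constructor
      · intro h i j hjA hiS
        rw [hWmem]; intro p a hy; exact h j hjA i hiS p a hy
      · intro h j hjA i hiS p a hy
        exact (hWmem i _).mp (h i j hjA hiS) p a hy
    have hfacL : (Finset.univ.filter (fun G : Fin N → Matrix (Fin n) (Fin n) F =>
        ∀ i, ∀ j ∈ A, i ∈ S j → (c j i ᵥ* G i) ∈ W i)).card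
        = ∏ i, (Finset.univ.filter fun M : Matrix (Fin n) (Fin n) F =>
            ∀ j ∈ A, i ∈ S j → (c j i ᵥ* M) ∈ W i).card :=
      card_filter_pi_eq
        (fun i (M : Matrix (Fin n) (Fin n) F) => ∀ j ∈ A, i ∈ S j → (c j i ᵥ* M) ∈ W i)
        (fun G : Fin N → Matrix (Fin n) (Fin n) F =>
          ∀ i, ∀ j ∈ A, i ∈ S j → (c j i ᵥ* G i) ∈ W i)
        (fun G => Iff.rfl)
    rw [hre, hfacL]
    push_cast
    exact Finset.prod_congr rfl fun i _ => hL i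
  -- total count of a single event
  have hRHS : ∀ j ∈ A, ((Finset.univ.filter (fun G : Fin N → Matrix (Fin n) (Fin n) F =>
      ∀ i ∈ S j, ∀ p : Fin n, ∀ a : F,
        y i p = some a → Matrix.vecMul (c j i) (G i) p = a)).card : ℝ)
      = (Q : ℝ) ^ N * ∏ i ∈ S j, wr i := by
    intro j hjA
    have hre : (Finset.univ.filter (fun G : Fin N → Matrix (Fin n) (Fin n) F =>
        ∀ i ∈ S j, ∀ p : Fin n, ∀ a : F,
          y i p = some a → Matrix.vecMul (c j i) (G i) p = a))
        = Finset.univ.filter (fun G : Fin N → Matrix (Fin n) (Fin n) F =>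
          ∀ i, i ∈ S j → (c j i ᵥ* G i) ∈ W i) := by
      ext G
      simp only [Finset.mem_filter, Finset.mem_univ, true_and]
      constructor
      · intro h i hiS
        rw [hWmem]; intro p a hy; exact h i hiS p a hy
      · intro h i hiS p a hy
        exact (hWmem i _).mp (h i hiS) p a hy
    have hfacR : (Finset.univ.filter (fun G : Fin N → Matrix (Fin n) (Fin n) F =>
        ∀ i, i ∈ S j → (c j i ᵥ* G i) ∈ W i)).card
        = ∏ i, (Finset.univ.filter fun M : Matrix (Fin n) (Fin n) F =>
            i ∈ S j → (c j i ᵥ* M) ∈ W i).card :=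
      card_filter_pi_eq
        (fun i (M : Matrix (Fin n) (Fin n) F) => i ∈ S j → (c j i ᵥ* M) ∈ W i)
        (fun G : Fin N → Matrix (Fin n) (Fin n) F =>
          ∀ i, i ∈ S j → (c j i ᵥ* G i) ∈ W i)
        (fun G => Iff.rfl)
    rw [hre, hfacR]
    push_cast
    have : ∀ i : Fin N, ((Finset.univ.filter fun M : Matrix (Fin n) (Fin n) F =>
        i ∈ S j → (c j i ᵥ* M) ∈ W i).card : ℝ)
        = (Q : ℝ) * (if i ∈ S j then wr i else 1) := by
      intro i
      by_cases hiS : i ∈ S j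
      · have : (Finset.univ.filter fun M : Matrix (Fin n) (Fin n) F =>
            i ∈ S j → (c j i ᵥ* M) ∈ W i)
            = Finset.univ.filter fun M : Matrix (Fin n) (Fin n) F =>
              (c j i ᵥ* M) ∈ W i := by
          ext M; simp [hiS]
        rw [this, hK j i hiS, if_pos hiS]
      · have : (Finset.univ.filter fun M : Matrix (Fin n) (Fin n) F =>
            i ∈ S j → (c j i ᵥ* M) ∈ W i) = Finset.univ := by
          ext M; simp [hiS]
        rw [this, if_neg hiS, Finset.card_univ, mul_one, hQ]
    rw [Finset.prod_congr rfl fun i _ => this i, Finset.prod_mul_distrib,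
      Finset.prod_const, Finset.card_univ, Fintype.card_fin,
      Finset.prod_ite_mem, Finset.univ_inter]
  -- the double-product identity
  have hswap : ∏ i, wr i ^ t i = ∏ j ∈ A, ∏ i ∈ S j, wr i := by
    have := Finset.prod_comm' (s := A) (t := fun j => S j)
      (t' := (Finset.univ : Finset (Fin N)))
      (s' := fun i => A.filter fun j => i ∈ S j) (f := fun _ i => wr i)
      (fun j i => by simp only [Finset.mem_filter, Finset.mem_univ, and_true, true_and])
    rw [this]
    exact (Finset.prod_congr rfl fun i _ => by
      rw [Finset.prod_const]).symm
  -- cardinality of the ambient space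
  have hcard : (Fintype.card (Fin N → Matrix (Fin n) (Fin n) F) : ℝ) = (Q : ℝ) ^ N := by
    rw [Fintype.card_fun, Fintype.card_fin]; push_cast; ring
  rw [hLHS, hcard, Finset.prod_congr rfl hRHS]
  rw [Finset.prod_mul_distrib, Finset.prod_mul_distrib, Finset.prod_const,
    Finset.prod_const, Finset.card_univ, Fintype.card_fin, ← hswap]
  ring
end
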